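/- arXiv:0809.1207 — 4 statements merged into one kernel-verified Lean document; each statement's English description precedes it below -/
import Mathlib

section
/- Let g be a positive definite quadratic form on ℝ^{2n} = ℝⁿ × ℝⁿ which is splitted, i.e. g(z,ζ) = g₁(z) + g₂(ζ) for positive definite quadratic forms g₁, g₂ on ℝⁿ. Then there exist a basis e₁,…,e_n of ℝⁿ × {0} and vectors ε₁,…,ε_n in {0} × ℝⁿ such that e₁,…,e_n,ε₁,…,ε_n is a symplectic basis for the standard symplectic form σ on ℝ^{2n} (i.e. σ(e_j,e_k) = σ(ε_j,ε_k) = 0 and σ(e_j,ε_k) = −δ_{jk}), together with numbers λ₁,…,λ_n > 0, such that g(Z) = Σ_{j=1}^n λ_j (z_j² + ζ_j²) for every Z = Σ_{j=1}^n (z_j e_j + ζ_j ε_j). -/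
open MeasureTheory Complex Filter Topology
open scoped BigOperators ENNReal

noncomputable section

/-- `V n` is the configuration space `ℝⁿ`. -/
abbrev V (n : ℕ) := EuclideanSpace ℝ (Fin n)

/-- `W n` is the phase space `ℝ²ⁿ = ℝⁿ × ℝⁿ`. -/
abbrev W (n : ℕ) := V n × V n

/-- The standard symplectic form `σ((x,ξ),(y,η)) = ⟨y,ξ⟩ − ⟨x,η⟩` on `W n`. -/
def symp {n : ℕ} (X Y : W n) : ℝ := (∑ j, Y.1 j * X.2 j) - ∑ j, X.1 j * Y.2 j

/-- A Riemannian metric on `W n`: a positive definite quadratic form at each point. -/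
structure RMetric (n : ℕ) where
  val : W n → W n → ℝ
  quad : ∀ X : W n, ∃ B : W n →ₗ[ℝ] W n →ₗ[ℝ] ℝ, ∀ Z : W n, val X Z = B Z Z
  posdef : ∀ X : W n, ∀ Z : W n, Z ≠ 0 → 0 < val X Z

/-- The dual of a family of quadratic forms with respect to the symplectic form. -/
def dualFn {n : ℕ} (G : W n → W n → ℝ) (X Z : W n) : ℝ :=
  ⨆ Y : {Y : W n // Y ≠ 0}, (symp Y.1 Z) ^ 2 / G X Y.1

/-- The dual metric `g^σ`. -/
def dualM {n : ℕ} (g : RMetric n) : W n → W n → ℝ := dualFn g.val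

/-- Planck's function `h_g`. -/
def planck {n : ℕ} (g : RMetric n) (X : W n) : ℝ :=
  ⨆ Z : {Z : W n // Z ≠ 0}, Real.sqrt (g.val X Z.1 / dualM g X Z.1)

/-- `g` is slowly varying. -/
def IsSlowlyVarying {n : ℕ} (g : RMetric n) : Prop :=
  ∃ c > (0:ℝ), ∃ C > (0:ℝ), ∀ X Y : W n, g.val X (Y - X) ≤ c →
    ∀ Z : W n, C⁻¹ * g.val Y Z ≤ g.val X Z ∧ g.val X Z ≤ C * g.val Y Z

/-- a positive function `m` is `g`-continuous. -/
def IsGCont {n : ℕ} (g : RMetric n) (m : W n → ℝ) : Prop :=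
  ∃ c > (0:ℝ), ∃ C > (0:ℝ), ∀ X Y : W n, g.val X (Y - X) ≤ c →
    C⁻¹ * m Y ≤ m X ∧ m X ≤ C * m Y

/-- `g` is `σ`-temperate. -/
def IsSigmaTemperate {n : ℕ} (g : RMetric n) : Prop :=
  ∃ C > (0:ℝ), ∃ N₀ : ℕ, ∀ X Y Z : W n,
    g.val Y Z ≤ C * g.val X Z * (1 + dualM g Y (X - Y)) ^ N₀

/-- `g` is feasible: slowly varying with `h_g ≤ 1`. -/
def IsFeasible {n : ℕ} (g : RMetric n) : Prop :=
  IsSlowlyVarying g ∧ ∀ X : W n, planck g X ≤ 1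

/-- `g` is strongly feasible: feasible and `σ`-temperate. -/
def IsStronglyFeasible {n : ℕ} (g : RMetric n) : Prop :=
  IsFeasible g ∧ IsSigmaTemperate g

/-- a weight `m` is `(σ,g)`-temperate. -/
def IsSGTemperate {n : ℕ} (g : RMetric n) (m : W n → ℝ) : Prop :=
  ∃ C > (0:ℝ), ∃ N₀ : ℕ, ∀ X Y : W n,
    m X ≤ C * m Y * (1 + dualM g X (X - Y)) ^ N₀ ∧
    m X ≤ C * m Y * (1 + dualM g Y (X - Y)) ^ N₀

/-- `g` is splitted. -/
def IsSplitted {n : ℕ} (g : RMetric n) : Prop :=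
  ∀ X : W n, ∀ z ζ : V n, g.val X (z, ζ) = g.val X (z, -ζ)

/-- The seminorm `|a|^g_k(X)`: sup of the `k`-th differential over `g_X`-unit vectors. -/
def symbSemi {n : ℕ} (g : RMetric n) (a : W n → ℂ) (k : ℕ) (X : W n) : ℝ :=
  ⨆ Y : {Y : Fin k → W n // ∀ i, g.val X (Y i) ≤ 1},
    ‖iteratedFDeriv ℝ k a X Y.1‖

/-- Membership in the symbol class `S_N(m,g)`. -/
def MemSN {n : ℕ} (g : RMetric n) (m : W n → ℝ) (N : ℕ) (a : W n → ℂ) : Prop :=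
  ContDiff ℝ (N : ℕ∞) a ∧ ∀ k ≤ N, ∃ C : ℝ, ∀ X : W n, symbSemi g a k X ≤ C * m X

/-- Membership in the symbol class `S(m,g)`. -/
def MemS {n : ℕ} (g : RMetric n) (m : W n → ℝ) (a : W n → ℂ) : Prop :=
  ∀ N : ℕ, MemSN g m N a

/-- The norm `‖a‖^g_{m,N}` on `S_N(m,g)`. -/
def symbNorm {n : ℕ} (g : RMetric n) (m : W n → ℝ) (N : ℕ) (a : W n → ℂ) : ℝ :=
  ∑ k ∈ Finset.range (N + 1), ⨆ X : W n, symbSemi g a k X / m X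

/-- The weak form `B_{t,a}(f,h)` of the `t`-quantization `Op_t(a)`. -/
def tForm {n : ℕ} (t : ℝ) (a : W n → ℂ) (f h : SchwartzMap (V n) ℂ) : ℂ :=
  (2 * Real.pi : ℂ) ^ (-(n : ℤ)) * ∫ X : W n, a X *
    ∫ v : V n, f (X.1 - (1 - t) • v) * (starRingEnd ℂ) (h (X.1 + t • v)) *
      Complex.exp (Complex.I * ((∑ j, v j * X.2 j : ℝ) : ℂ))

/-- A finite family of Schwartz functions which is orthonormal in `L²`. -/
def ONFam {n k : ℕ} (f : Fin k → SchwartzMap (V n) ℂ) : Prop :=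
  ∀ i j, (∫ x : V n, f i x * (starRingEnd ℂ) (f j x)) = if i = j then (1:ℂ) else 0

/-- The value `(Σ_j |B_{t,a}(f_j,h_j)|^p)^{1/p}` (`sup_j` for `p = ∞`). -/
def spVal {n : ℕ} (p : ℝ≥0∞) (t : ℝ) (a : W n → ℂ) {k : ℕ}
    (f h : Fin k → SchwartzMap (V n) ℂ) : ℝ :=
  if p = ∞ then ⨆ j, ‖tForm t a (f j) (h j)‖
  else (∑ j, ‖tForm t a (f j) (h j)‖ ^ p.toReal) ^ (1 / p.toReal)

/-- The set of values over which the `s_{t,p}` norm is a supremum. -/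
def spSet {n : ℕ} (p : ℝ≥0∞) (t : ℝ) (a : W n → ℂ) : Set ℝ :=
  {r | ∃ (k : ℕ) (f h : Fin k → SchwartzMap (V n) ℂ),
    ONFam f ∧ ONFam h ∧ r = spVal p t a f h}

/-- `a ∈ s_{t,p}`: the `t`-quantization of `a` is a Schatten-von Neumann operator
of order `p`. -/
def MemSp {n : ℕ} (p : ℝ≥0∞) (t : ℝ) (a : W n → ℂ) : Prop := BddAbove (spSet p t a)

/-- The norm on `s_{t,p}`. -/
def spNorm {n : ℕ} (p : ℝ≥0∞) (t : ℝ) (a : W n → ℂ) : ℝ := sSup (spSet p t a)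

/-- `a ∈ s_♯^w`: the Weyl operator of `a` extends to a compact operator on `L²`. -/
def MemSsharp {n : ℕ} (a : W n → ℂ) : Prop :=
  ∃ T : Lp ℂ 2 (volume : Measure (V n)) →L[ℂ] Lp ℂ 2 (volume : Measure (V n)),
    IsCompactOperator T ∧
    ∀ (f h : SchwartzMap (V n) ℂ) (fL : Lp ℂ 2 (volume : Measure (V n))),
      (fL : V n → ℂ) =ᵐ[volume] (f : V n → ℂ) →
      (∫ x : V n, (T fL : V n → ℂ) x * (starRingEnd ℂ) (h x)) = tForm 2⁻¹ a f h

/-- Bounded by a polynomial in `|X|`. -/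
def PolyBounded {n : ℕ} {γ : Type*} [Norm γ] (u : W n → γ) : Prop :=
  ∃ C k : ℝ, ∀ X : W n, ‖u X‖ ≤ C * (1 + ‖X‖) ^ k

/-- Membership in `L^∞_0`: essentially bounded, with essential supremum outside balls
tending to `0`. -/
def MemLinfty0 {n : ℕ} {γ : Type*} [NormedAddCommGroup γ] (u : W n → γ) : Prop :=
  MemLp u ∞ (volume : Measure (W n)) ∧
    ∀ ε > (0:ℝ), ∃ R : ℝ, ∀ᵐ X : W n ∂(volume : Measure (W n)), R ≤ ‖X‖ → ‖u X‖ ≤ ε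


namespace Stmt10

open Matrix

variable {n : ℕ}

lemma expand_x (x : V n) : ∑ i, x i • (EuclideanSpace.single i (1:ℝ)) = x := by
  simpa [EuclideanSpace.basisFun_apply, EuclideanSpace.basisFun_repr] using
    (EuclideanSpace.basisFun (Fin n) ℝ).sum_repr x

lemma bilin_eq (D : V n →ₗ[ℝ] V n →ₗ[ℝ] ℝ) (x y : V n) :
    D x y = ∑ i, ∑ j, x i * y j *
      D (EuclideanSpace.single i 1) (EuclideanSpace.single j 1) := by
  conv_lhs => rw [← expand_x x, ← expand_x y]
  simp only [map_sum, _root_.map_smul, LinearMap.sum_apply, LinearMap.smul_apply,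
    smul_eq_mul, Finset.mul_sum]
  rw [Finset.sum_comm]
  exact Finset.sum_congr rfl fun i _ => Finset.sum_congr rfl fun j _ => by ring

lemma dot_symm {M : Matrix (Fin n) (Fin n) ℝ} (hM : ∀ i j, M j i = M i j)
    (x y : Fin n → ℝ) : M *ᵥ x ⬝ᵥ y = x ⬝ᵥ M *ᵥ y := by
  simp only [dotProduct, mulVec]
  calc ∑ i, (∑ j, M i j * x j) * y i
      = ∑ i, ∑ j, M i j * x j * y i :=
        Finset.sum_congr rfl fun i _ => Finset.sum_mul ..
    _ = ∑ i, ∑ j, M j i * x i * y j := Finset.sum_comm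
    _ = ∑ i, x i * ∑ j, M i j * y j := by
        refine Finset.sum_congr rfl fun i _ => ?_
        rw [Finset.mul_sum]
        exact Finset.sum_congr rfl fun j _ => by rw [hM i j]; ring

lemma dot_eq (M : Matrix (Fin n) (Fin n) ℝ) (x y : Fin n → ℝ) :
    x ⬝ᵥ M *ᵥ y = ∑ i, ∑ j, x i * y j * M i j := by
  simp only [dotProduct, mulVec, Finset.mul_sum]
  exact Finset.sum_congr rfl fun i _ => Finset.sum_congr rfl fun j _ => by ring

/-- The matrix of the symmetrization of a bilinear form. -/
def symMat (D : V n →ₗ[ℝ] V n →ₗ[ℝ] ℝ) : Matrix (Fin n) (Fin n) ℝ :=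
  Matrix.of fun i j =>
    (D (EuclideanSpace.single i 1) (EuclideanSpace.single j 1) +
     D (EuclideanSpace.single j 1) (EuclideanSpace.single i 1)) / 2

lemma symMat_symm (D : V n →ₗ[ℝ] V n →ₗ[ℝ] ℝ) (i j : Fin n) :
    symMat D j i = symMat D i j := by
  simp only [symMat, Matrix.of_apply]; ring

lemma symMat_dot (D : V n →ₗ[ℝ] V n →ₗ[ℝ] ℝ) (x y : V n) :
    (x : Fin n → ℝ) ⬝ᵥ symMat D *ᵥ (y : Fin n → ℝ) = (D x y + D y x) / 2 := by
  have hswap : ∑ i, ∑ j, y i * x j *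
        D (EuclideanSpace.single i 1) (EuclideanSpace.single j 1)
      = ∑ i, ∑ j, x i * y j *
        D (EuclideanSpace.single j 1) (EuclideanSpace.single i 1) := by
    rw [Finset.sum_comm]
    exact Finset.sum_congr rfl fun i _ => Finset.sum_congr rfl fun j _ => by ring
  rw [dot_eq, bilin_eq D x y, bilin_eq D y x, hswap, ← Finset.sum_add_distrib,
    Finset.sum_div]
  refine Finset.sum_congr rfl fun i _ => ?_
  rw [← Finset.sum_add_distrib, Finset.sum_div]
  refine Finset.sum_congr rfl fun j _ => ?_
  simp only [symMat, Matrix.of_apply]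
  ring

lemma symMat_hermitian (D : V n →ₗ[ℝ] V n →ₗ[ℝ] ℝ) : (symMat D).IsHermitian := by
  ext i j
  simp only [Matrix.conjTranspose_apply, star_trivial]
  exact symMat_symm D i j

lemma symMat_posDef (D : V n →ₗ[ℝ] V n →ₗ[ℝ] ℝ) (hD : ∀ z : V n, z ≠ 0 → 0 < D z z) :
    (symMat D).PosDef := by
  refine Matrix.PosDef.of_dotProduct_mulVec_pos (symMat_hermitian D) fun x hx => ?_
  have hst : star x = x := funext fun i => star_trivial _
  rw [hst]
  have := symMat_dot D (WithLp.toLp 2 x) (WithLp.toLp 2 x)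
  rw [this]
  have hpos := hD (WithLp.toLp 2 x) (by simpa using hx)
  linarith

lemma quad_expand (D : V n →ₗ[ℝ] V n →ₗ[ℝ] ℝ) (v : Fin n → V n) (c lam : Fin n → ℝ)
    (h : ∀ j k, D (v j) (v k) + D (v k) (v j) = 2 * (if j = k then lam j else 0)) :
    D (∑ j, c j • v j) (∑ j, c j • v j) = ∑ j, lam j * c j ^ 2 := by
  have step1 : D (∑ j, c j • v j) (∑ j, c j • v j)
      = ∑ j, ∑ k, c j * c k * D (v j) (v k) := by
    simp only [map_sum, _root_.map_smul, LinearMap.sum_apply, LinearMap.smul_apply,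
      smul_eq_mul, Finset.mul_sum]
    rw [Finset.sum_comm]
    exact Finset.sum_congr rfl fun i _ => Finset.sum_congr rfl fun j _ => by ring
  have hsw : ∑ j, ∑ k, c j * c k * D (v j) (v k)
      = ∑ j, ∑ k, c j * c k * D (v k) (v j) := by
    rw [Finset.sum_comm]
    exact Finset.sum_congr rfl fun i _ => Finset.sum_congr rfl fun j _ => by ring
  have h2 : (∑ j, ∑ k, c j * c k * D (v j) (v k))
        + ∑ j, ∑ k, c j * c k * D (v k) (v j)
      = ∑ j, ∑ k, 2 * (if j = k then c j * c k * lam j else 0) := by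
    rw [← Finset.sum_add_distrib]
    refine Finset.sum_congr rfl fun j _ => ?_
    rw [← Finset.sum_add_distrib]
    refine Finset.sum_congr rfl fun k _ => ?_
    have : c j * c k * D (v j) (v k) + c j * c k * D (v k) (v j)
        = c j * c k * (D (v j) (v k) + D (v k) (v j)) := by ring
    rw [this, h j k]
    split_ifs <;> ring
  have h2' : (2:ℝ) * (∑ j, ∑ k, c j * c k * D (v j) (v k))
      = 2 * ∑ j, ∑ k, (if j = k then c j * c k * lam j else 0) := by
    rw [two_mul]
    nth_rewrite 2 [hsw]
    rw [h2, Finset.mul_sum]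
    refine Finset.sum_congr rfl fun j _ => ?_
    exact (Finset.mul_sum _ _ _).symm
  have h3 := mul_left_cancel₀ (two_ne_zero (α := ℝ)) h2'
  rw [step1, h3]
  refine Finset.sum_congr rfl fun j _ => ?_
  rw [Finset.sum_ite_eq]
  simp only [Finset.mem_univ, if_true]
  ring

/-- Main construction: simultaneous diagonalization of two positive definite
quadratic forms via dual bases. -/
lemma main_aux (B₁ B₂ : V n →ₗ[ℝ] V n →ₗ[ℝ] ℝ)
    (h₁ : ∀ z : V n, z ≠ 0 → 0 < B₁ z z) (h₂ : ∀ z : V n, z ≠ 0 → 0 < B₂ z z) :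
    ∃ (a b : Fin n → (Fin n → ℝ)) (lam : Fin n → ℝ),
      (∀ j, 0 < lam j) ∧
      (∀ j k, a j ⬝ᵥ b k = if j = k then 1 else 0) ∧
      (∀ j k, B₁ (WithLp.toLp 2 (a j)) (WithLp.toLp 2 (a k)) + B₁ (WithLp.toLp 2 (a k)) (WithLp.toLp 2 (a j)) = 2 * (if j = k then lam j else 0)) ∧
      (∀ j k, B₂ (WithLp.toLp 2 (b j)) (WithLp.toLp 2 (b k)) + B₂ (WithLp.toLp 2 (b k)) (WithLp.toLp 2 (b j)) = 2 * (if j = k then lam j else 0)) := by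
  set M₁ := symMat B₁ with hM₁def
  set M₂ := symMat B₂ with hM₂def
  have hM₁pos : M₁.PosDef := symMat_posDef B₁ h₁
  have hM₂pos : M₂.PosDef := symMat_posDef B₂ h₂
  set S := (open scoped MatrixOrder in CFC.sqrt M₁) with hSdef
  have hSsd : S.PosSemidef := open scoped MatrixOrder in (CFC.sqrt_nonneg M₁).posSemidef
  have hSS : S * S = M₁ := open scoped MatrixOrder in CFC.sqrt_mul_sqrt_self M₁ hM₁pos.posSemidef.nonneg
  have hSe : ∀ i j, S j i = S i j := by
    intro i j
    conv_lhs => rw [← hSsd.1]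
    simp [Matrix.conjTranspose_apply]
  have hdet : IsUnit S.det := by
    have hd : S.det * S.det = M₁.det := by rw [← Matrix.det_mul, hSS]
    have : M₁.det ≠ 0 := ne_of_gt hM₁pos.det_pos
    have hs : S.det ≠ 0 := fun h => this (by rw [← hd, h, mul_zero])
    exact hs.isUnit
  have hS1 : S * S⁻¹ = 1 := Matrix.mul_nonsing_inv _ hdet
  have hS2 : S⁻¹ * S = 1 := Matrix.nonsing_inv_mul _ hdet
  have hSiS : ∀ x : Fin n → ℝ, S *ᵥ (S⁻¹ *ᵥ x) = x := fun x => by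
    rw [Matrix.mulVec_mulVec, hS1, Matrix.one_mulVec]
  have hSSi : ∀ x : Fin n → ℝ, S⁻¹ *ᵥ (S *ᵥ x) = x := fun x => by
    rw [Matrix.mulVec_mulVec, hS2, Matrix.one_mulVec]
  set A := S * M₂ * S with hAdef
  have hAh : A.IsHermitian := by
    have : Aᴴ = Sᴴ * (M₂ᴴ * Sᴴ) := by
      rw [hAdef, Matrix.conjTranspose_mul, Matrix.conjTranspose_mul]
    rw [Matrix.IsHermitian, this, hSsd.1, hM₂pos.1, ← mul_assoc]
  have hApos : A.PosDef := by
    refine Matrix.PosDef.of_dotProduct_mulVec_pos hAh fun x hx => ?_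
    have hst : star x = x := funext fun i => star_trivial _
    rw [hst]
    have hAv : A *ᵥ x = S *ᵥ (M₂ *ᵥ (S *ᵥ x)) := by
      rw [Matrix.mulVec_mulVec, Matrix.mulVec_mulVec]
    have hSx : S *ᵥ x ≠ 0 := by
      intro h
      apply hx
      rw [← hSSi x, h, Matrix.mulVec_zero]
    have key : x ⬝ᵥ A *ᵥ x = (S *ᵥ x) ⬝ᵥ M₂ *ᵥ (S *ᵥ x) := by
      rw [hAv, ← dot_symm hSe]
    rw [key]
    have := symMat_dot B₂ (WithLp.toLp 2 (S *ᵥ x)) (WithLp.toLp 2 (S *ᵥ x))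
    rw [← hM₂def] at this
    rw [this]
    have := h₂ (WithLp.toLp 2 (S *ᵥ x)) (by simpa using hSx)
    linarith
  set μ := hAh.eigenvalues with hμdef
  have hμpos : ∀ j, 0 < μ j := hApos.eigenvalues_pos
  set u : Fin n → (Fin n → ℝ) := fun j => ⇑(hAh.eigenvectorBasis j) with hudef
  have huu : ∀ j k, u j ⬝ᵥ u k = if j = k then 1 else 0 := by
    intro j k
    have := orthonormal_iff_ite.mp (hAh.eigenvectorBasis).orthonormal j k
    rw [← this]
    simp only [PiLp.inner_apply, RCLike.inner_apply, starRingEnd_apply,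
      dotProduct, star_trivial]
    exact Finset.sum_congr rfl fun i _ => mul_comm _ _
  have hAu : ∀ j, A *ᵥ u j = μ j • u j := fun j => hAh.mulVec_eigenvectorBasis j
  set lam : Fin n → ℝ := fun j => Real.sqrt (μ j) with hlamdef
  have hlampos : ∀ j, 0 < lam j := fun j => Real.sqrt_pos.2 (hμpos j)
  have hlamsq : ∀ j, lam j * lam j = μ j := fun j => Real.mul_self_sqrt (hμpos j).le
  refine ⟨fun j => Real.sqrt (lam j) • (S⁻¹ *ᵥ u j),
          fun j => (Real.sqrt (lam j))⁻¹ • (S *ᵥ u j), lam, hlampos, ?_, ?_, ?_⟩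
  · -- duality
    intro j k
    have base : (S⁻¹ *ᵥ u j) ⬝ᵥ (S *ᵥ u k) = if j = k then 1 else 0 := by
      rw [← dot_symm hSe, hSiS, huu]
    rw [smul_dotProduct, dotProduct_smul, base]
    split_ifs with h
    · subst h
      rw [smul_eq_mul, smul_eq_mul, mul_one,
        mul_inv_cancel₀ (Real.sqrt_ne_zero'.2 (hlampos j))]
    · simp
  · -- B₁ values
    intro j k
    have hd : ∀ x y : Fin n → ℝ, B₁ (WithLp.toLp 2 x) (WithLp.toLp 2 y) + B₁ (WithLp.toLp 2 y) (WithLp.toLp 2 x) = 2 * (x ⬝ᵥ M₁ *ᵥ y) := by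
      intro x y
      rw [symMat_dot B₁ (WithLp.toLp 2 x) (WithLp.toLp 2 y)]
      ring
    rw [hd]
    congr 1
    have hMa : M₁ *ᵥ (Real.sqrt (lam k) • (S⁻¹ *ᵥ u k))
        = Real.sqrt (lam k) • (S *ᵥ u k) := by
      rw [Matrix.mulVec_smul, ← hSS, ← Matrix.mulVec_mulVec, hSiS]
    rw [hMa, smul_dotProduct, dotProduct_smul]
    have base : (S⁻¹ *ᵥ u j) ⬝ᵥ (S *ᵥ u k) = if j = k then 1 else 0 := by
      rw [← dot_symm hSe, hSiS, huu]
    rw [base]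
    split_ifs with h
    · subst h
      rw [smul_eq_mul, smul_eq_mul, mul_one,
        Real.mul_self_sqrt (hlampos j).le]
    · simp
  · -- B₂ values
    intro j k
    have hd : ∀ x y : Fin n → ℝ, B₂ (WithLp.toLp 2 x) (WithLp.toLp 2 y) + B₂ (WithLp.toLp 2 y) (WithLp.toLp 2 x) = 2 * (x ⬝ᵥ M₂ *ᵥ y) := by
      intro x y
      rw [symMat_dot B₂ (WithLp.toLp 2 x) (WithLp.toLp 2 y)]
      ring
    rw [hd]
    congr 1
    have key : (S *ᵥ u j) ⬝ᵥ M₂ *ᵥ ((Real.sqrt (lam k))⁻¹ • (S *ᵥ u k))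
        = (Real.sqrt (lam k))⁻¹ * (μ k * (u j ⬝ᵥ u k)) := by
      rw [Matrix.mulVec_smul, dotProduct_smul, dot_symm hSe,
        Matrix.mulVec_mulVec, Matrix.mulVec_mulVec]
      rw [show S * M₂ * S = A from rfl, hAu k, dotProduct_smul]
      simp [smul_eq_mul]
    rw [smul_dotProduct, smul_eq_mul, key, huu]
    split_ifs with h
    · subst h
      have hne : Real.sqrt (lam j) ≠ 0 := Real.sqrt_ne_zero'.2 (hlampos j)
      have hsq : Real.sqrt (lam j) * Real.sqrt (lam j) = lam j :=
        Real.mul_self_sqrt (hlampos j).le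
      field_simp
      rw [← hlamsq j]
      rw [sq, hsq]
    · simp

end Stmt10


/-- Lemma `G0lemma`: a splitted positive definite quadratic form
on `ℝ²ⁿ` can be diagonalized by a splitted symplectic basis. -/
theorem statement10 (n : ℕ) (Q : W n → ℝ)
    (B : W n →ₗ[ℝ] W n →ₗ[ℝ] ℝ) (hQB : ∀ Z : W n, Q Z = B Z Z)
    (hpos : ∀ Z : W n, Z ≠ 0 → 0 < Q Z)
    (hsplit : ∃ (B₁ B₂ : V n →ₗ[ℝ] V n →ₗ[ℝ] ℝ),
      (∀ z : V n, z ≠ 0 → 0 < B₁ z z) ∧ (∀ ζ : V n, ζ ≠ 0 → 0 < B₂ ζ ζ) ∧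
      ∀ z ζ : V n, Q (z, ζ) = B₁ z z + B₂ ζ ζ) :
    ∃ (e ε' : Fin n → W n) (lam : Fin n → ℝ),
      (∀ j, 0 < lam j) ∧
      (∀ j, (e j).2 = 0) ∧ (∀ j, (ε' j).1 = 0) ∧
      LinearIndependent ℝ e ∧
      (∀ j k, symp (e j) (e k) = 0) ∧
      (∀ j k, symp (ε' j) (ε' k) = 0) ∧
      (∀ j k, symp (e j) (ε' k) = -(if j = k then (1:ℝ) else 0)) ∧
      ∀ z ζ : Fin n → ℝ,
        Q ((∑ j, z j • e j) + ∑ j, ζ j • ε' j) =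
          ∑ j, lam j * ((z j) ^ 2 + (ζ j) ^ 2) := by
  obtain ⟨B₁, B₂, h₁, h₂, hQ12⟩ := hsplit
  obtain ⟨a, b, lam, hlam, hab, hB₁, hB₂⟩ := Stmt10.main_aux B₁ B₂ h₁ h₂
  refine ⟨fun j => ((WithLp.toLp 2 (a j) : V n), 0), fun j => (0, (WithLp.toLp 2 (b j) : V n)), lam, hlam,
    fun j => rfl, fun j => rfl, ?_, ?_, ?_, ?_, ?_⟩
  · -- linear independence
    rw [Fintype.linearIndependent_iff]
    intro g hg j
    have hfst : (∑ k, g k • (WithLp.toLp 2 (a k) : V n)) = 0 := by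
      have := congrArg Prod.fst hg
      simpa [Prod.fst_sum] using this
    have h2 : dotProduct (∑ k, g k • (a k : Fin n → ℝ)) (b j) = 0 := by
      rw [show (∑ k, g k • (a k : Fin n → ℝ)) = (0 : Fin n → ℝ) by
            simpa [WithLp.ofLp_sum] using congrArg WithLp.ofLp hfst,
        zero_dotProduct]
    have h3 : ∑ k, g k * dotProduct (a k) (b j) = 0 := by
      rw [← h2]
      simp only [dotProduct, Finset.sum_apply, Pi.smul_apply, smul_eq_mul,
        Finset.mul_sum, Finset.sum_mul]
      rw [Finset.sum_comm]
      exact Finset.sum_congr rfl fun i _ => Finset.sum_congr rfl fun k _ => by ring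
    simp only [hab, mul_ite, mul_one, mul_zero] at h3
    rwa [Finset.sum_ite_eq' Finset.univ j g, if_pos (Finset.mem_univ j)] at h3
  · intro j k
    simp [symp]
  · intro j k
    simp [symp]
  · intro j k
    have hjk := hab j k
    simp only [dotProduct] at hjk
    simp [symp, hjk]
  · intro z ζ
    have hsum : ((∑ j, z j • (((WithLp.toLp 2 (a j) : V n), (0:V n)) : W n))
          + ∑ j, ζ j • (((0:V n), (WithLp.toLp 2 (b j) : V n)) : W n))
        = ((∑ j, z j • (WithLp.toLp 2 (a j) : V n)), (∑ j, ζ j • (WithLp.toLp 2 (b j) : V n))) := by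
      refine Prod.ext ?_ ?_ <;> simp [Prod.fst_sum, Prod.snd_sum]
    rw [hsum, hQ12]
    rw [Stmt10.quad_expand B₁ (fun j => (WithLp.toLp 2 (a j) : V n)) z lam hB₁,
        Stmt10.quad_expand B₂ (fun j => (WithLp.toLp 2 (b j) : V n)) ζ lam hB₂,
        ← Finset.sum_add_distrib]
    exact Finset.sum_congr rfl fun j _ => by ring

end
end

section
/- Let g be a positive definite quadratic form on ℝ^{2n} with standard symplectic form σ, and suppose there exist linear symplectic coordinates in which g(Z) = Σ_{j=1}^n λ_j (z_j² + ζ_j²) with λ₁ ≥ λ₂ ≥ … ≥ λ_n > 0. Then for each j ∈ {1,…,n}, λ_j = inf over all symplectic subspaces W_j ⊆ ℝ^{2n} of dimension 2(n − j + 1) of sup_{Y ∈ W_j, Y ≠ 0} (g(Y)/g^σ(Y))^{1/2}, where a linear subspace is called symplectic if the restriction of σ to it is nondegenerate, and g^σ(Z) = sup_{Y ≠ 0} σ(Y,Z)²/g(Y). In particular the numbers λ_j depend only on g and not on the choice of diagonalizing symplectic coordinates. -/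
open MeasureTheory Complex Filter Topology
open scoped BigOperators ENNReal

noncomputable section

/-- The dual of a single quadratic form with respect to the symplectic form. -/
def dualQ {n : ℕ} (Q : W n → ℝ) (Z : W n) : ℝ :=
  ⨆ Y : {Y : W n // Y ≠ 0}, (symp Y.1 Z) ^ 2 / Q Y.1

/-- A subspace of `W n` is symplectic if `σ` restricted to it is nondegenerate. -/
def IsSympSubspace {n : ℕ} (Wj : Submodule ℝ (W n)) : Prop :=
  ∀ Y ∈ Wj, (∀ Z ∈ Wj, symp Y Z = 0) → Y = 0

def coordSub (n : ℕ) (s : Finset (Fin n)) : Submodule ℝ (W n) where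
  carrier := {Z | ∀ k, k ∉ s → Z.1 k = 0 ∧ Z.2 k = 0}
  add_mem' := by
    intro a b ha hb k hk
    have h1 := ha k hk; have h2 := hb k hk
    constructor <;> show _ + _ = (0:ℝ)
    · exact (congrArg₂ (· + ·) h1.1 h2.1).trans (add_zero 0)
    · exact (congrArg₂ (· + ·) h1.2 h2.2).trans (add_zero 0)
  zero_mem' := by intro k hk; exact ⟨rfl, rfl⟩
  smul_mem' := by
    intro c a ha k hk
    have h1 := ha k hk
    constructor <;> show c * _ = (0:ℝ)
    · exact (congrArg (c * ·) h1.1).trans (mul_zero c)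
    · exact (congrArg (c * ·) h1.2).trans (mul_zero c)

def coordSubEquiv (n : ℕ) (s : Finset (Fin n)) :
    coordSub n s ≃ₗ[ℝ] (s → ℝ) × (s → ℝ) where
  toFun Z := (fun k => Z.1.1 k.1, fun k => Z.1.2 k.1)
  map_add' a b := rfl
  map_smul' c a := rfl
  invFun f := ⟨(WithLp.toLp 2 (fun k => if h : k ∈ s then f.1 ⟨k, h⟩ else 0),
               WithLp.toLp 2 (fun k => if h : k ∈ s then f.2 ⟨k, h⟩ else 0)), by
      intro k hk; constructor <;> simp [hk]⟩
  left_inv := by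
    rintro ⟨⟨x, ξ⟩, hZ⟩
    apply Subtype.ext
    apply Prod.ext <;> refine PiLp.ext fun k => ?_ <;> by_cases h : k ∈ s <;> simp [h]
    · exact (hZ k h).1.symm
    · exact (hZ k h).2.symm
  right_inv := by intro f; apply Prod.ext <;> funext k <;> simp [k.2]

lemma finrank_coordSub (n : ℕ) (s : Finset (Fin n)) :
    Module.finrank ℝ (coordSub n s) = 2 * s.card := by
  rw [LinearEquiv.finrank_eq (coordSubEquiv n s), Module.finrank_prod,
    Module.finrank_pi, Fintype.card_coe]
  ring

lemma exists_coord_ne {n : ℕ} {Z : W n} (hZ : Z ≠ 0) : ∃ k, Z.1 k ≠ 0 ∨ Z.2 k ≠ 0 := by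
  by_contra h
  push_neg at h
  exact hZ (Prod.ext (PiLp.ext fun k => (h k).1) (PiLp.ext fun k => (h k).2))

section main
variable {n : ℕ} (lam : Fin n → ℝ)

def sQ (Z : W n) : ℝ := ∑ j, lam j * ((Z.1 j) ^ 2 + (Z.2 j) ^ 2)
def dQ (Z : W n) : ℝ := ∑ j, (lam j)⁻¹ * ((Z.1 j) ^ 2 + (Z.2 j) ^ 2)

lemma sQ_pos (hlam0 : ∀ j, 0 < lam j) {Z : W n} (hZ : Z ≠ 0) : 0 < sQ lam Z := by
  obtain ⟨k, hk⟩ := exists_coord_ne hZ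
  have hks : 0 < (Z.1 k) ^ 2 + (Z.2 k) ^ 2 := by
    rcases hk with h | h <;> positivity
  exact Finset.sum_pos' (fun i _ => mul_nonneg (hlam0 i).le (by positivity))
    ⟨k, Finset.mem_univ k, mul_pos (hlam0 k) hks⟩

lemma dQ_pos (hlam0 : ∀ j, 0 < lam j) {Z : W n} (hZ : Z ≠ 0) : 0 < dQ lam Z := by
  obtain ⟨k, hk⟩ := exists_coord_ne hZ
  have hks : 0 < (Z.1 k) ^ 2 + (Z.2 k) ^ 2 := by
    rcases hk with h | h <;> positivity
  exact Finset.sum_pos' (fun i _ => mul_nonneg (inv_nonneg.2 (hlam0 i).le) (by positivity))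
    ⟨k, Finset.mem_univ k, mul_pos (inv_pos.2 (hlam0 k)) hks⟩

/-- Cauchy–Schwarz: `σ(Y,Z)² ≤ sQ(Y) * dQ(Z)`. -/
lemma symp_sq_le (hlam0 : ∀ j, 0 < lam j) (Y Z : W n) :
    (symp Y Z) ^ 2 ≤ sQ lam Y * dQ lam Z := by
  have key : symp Y Z = ∑ i : Fin n ⊕ Fin n,
      (Sum.elim (fun k => Real.sqrt (lam k) * Y.2 k) (fun k => Real.sqrt (lam k) * Y.1 k) i) *
      (Sum.elim (fun k => Z.1 k / Real.sqrt (lam k)) (fun k => -Z.2 k / Real.sqrt (lam k)) i) := by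
    rw [Fintype.sum_sum_type]
    simp only [Sum.elim_inl, Sum.elim_inr]
    rw [symp, ← Finset.sum_add_distrib, ← Finset.sum_sub_distrib]
    apply Finset.sum_congr rfl
    intro k _
    have h : Real.sqrt (lam k) ≠ 0 := ne_of_gt (Real.sqrt_pos.2 (hlam0 k))
    field_simp
    ring
  rw [key]
  have CS := Finset.sum_mul_sq_le_sq_mul_sq Finset.univ
      (Sum.elim (fun k => Real.sqrt (lam k) * Y.2 k) (fun k => Real.sqrt (lam k) * Y.1 k))
      (Sum.elim (fun k => Z.1 k / Real.sqrt (lam k)) (fun k => -Z.2 k / Real.sqrt (lam k)))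
  refine CS.trans_eq ?_
  congr 1
  · rw [Fintype.sum_sum_type]
    simp only [Sum.elim_inl, Sum.elim_inr]
    rw [sQ, ← Finset.sum_add_distrib]
    apply Finset.sum_congr rfl
    intro k _
    rw [mul_pow, mul_pow, Real.sq_sqrt (hlam0 k).le]
    ring
  · rw [Fintype.sum_sum_type]
    simp only [Sum.elim_inl, Sum.elim_inr]
    rw [dQ, ← Finset.sum_add_distrib]
    apply Finset.sum_congr rfl
    intro k _
    rw [neg_div, neg_sq, div_pow, div_pow, Real.sq_sqrt (hlam0 k).le]
    field_simp

end main

section dual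
variable {n : ℕ} {lam : Fin n → ℝ} (hlam0 : ∀ j, 0 < lam j)
  {Q : W n → ℝ} {T : W n ≃ₗ[ℝ] W n}
  (hT : ∀ X Y : W n, symp (T X) (T Y) = symp X Y)
  (hdiag : ∀ Z : W n, Q (T Z) = sQ lam Z)
include hlam0 hT hdiag

omit hT in
lemma Q_pos {Y : W n} (hY : Y ≠ 0) : 0 < Q Y := by
  have h1 : Q Y = sQ lam (T.symm Y) := by rw [← hdiag, T.apply_symm_apply]
  rw [h1]
  exact sQ_pos lam hlam0 (by simp [hY])

lemma dual_eq {Z : W n} (hZ : Z ≠ 0) : dualQ Q (T Z) = dQ lam Z := by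
  have hupper : ∀ Y : {Y : W n // Y ≠ 0},
      (symp Y.1 (T Z)) ^ 2 / Q Y.1 ≤ dQ lam Z := by
    rintro ⟨Y, hY⟩
    have hY' : T.symm Y ≠ 0 := by simp [hY]
    have h1 : Y = T (T.symm Y) := (T.apply_symm_apply Y).symm
    rw [div_le_iff₀ (Q_pos hlam0 hdiag hY)]
    calc (symp Y (T Z)) ^ 2 = (symp (T.symm Y) Z) ^ 2 := by
          rw [← hT (T.symm Y) Z, T.apply_symm_apply]
      _ ≤ sQ lam (T.symm Y) * dQ lam Z := symp_sq_le lam hlam0 _ _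
      _ = dQ lam Z * Q Y := by
          rw [mul_comm]; congr 1; rw [← hdiag, T.apply_symm_apply]
  have hbdd : BddAbove (Set.range fun Y : {Y : W n // Y ≠ 0} =>
      (symp Y.1 (T Z)) ^ 2 / Q Y.1) := ⟨dQ lam Z, by rintro _ ⟨Y, rfl⟩; exact hupper Y⟩
  set W₀ : W n := ((WithLp.toLp 2 (fun k => -((lam k)⁻¹ * Z.2 k)) : V n),
    (WithLp.toLp 2 (fun k => (lam k)⁻¹ * Z.1 k) : V n)) with hW₀
  have hW₀ne : W₀ ≠ 0 := by
    obtain ⟨k, hk⟩ := exists_coord_ne hZ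
    intro h0
    have h1 : W₀.1 k = 0 := by rw [h0]; rfl
    have h2 : W₀.2 k = 0 := by rw [h0]; rfl
    have hli : (lam k)⁻¹ ≠ 0 := inv_ne_zero (hlam0 k).ne'
    rcases hk with h | h
    · exact h (by simpa [hW₀, hli] using h2)
    · exact h (by simpa [hW₀, hli] using h1)
  have hTW₀ne : T W₀ ≠ 0 := fun h => hW₀ne ((LinearEquiv.map_eq_zero_iff T).mp h)
  have hsymp : symp (T W₀) (T Z) = dQ lam Z := by
    rw [hT, symp, ← Finset.sum_sub_distrib, dQ]
    apply Finset.sum_congr rfl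
    intro k _
    show Z.1 k * ((lam k)⁻¹ * Z.1 k) - -((lam k)⁻¹ * Z.2 k) * Z.2 k = _
    ring
  have hQW₀ : Q (T W₀) = dQ lam Z := by
    rw [hdiag, sQ, dQ]
    apply Finset.sum_congr rfl
    intro k _
    show lam k * ((-((lam k)⁻¹ * Z.2 k)) ^ 2 + ((lam k)⁻¹ * Z.1 k) ^ 2) = _
    field_simp [(hlam0 k).ne']
    ring
  have hwit : (symp (T W₀) (T Z)) ^ 2 / Q (T W₀) = dQ lam Z := by
    rw [hsymp, hQW₀, sq, mul_div_assoc,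
      div_self (dQ_pos lam hlam0 hZ).ne', mul_one]
  have hne : Nonempty {Y : W n // Y ≠ 0} := ⟨⟨T W₀, hTW₀ne⟩⟩
  apply le_antisymm
  · exact ciSup_le hupper
  · calc dQ lam Z = (symp (T W₀) (T Z)) ^ 2 / Q (T W₀) := hwit.symm
      _ ≤ _ := le_ciSup hbdd ⟨T W₀, hTW₀ne⟩

lemma sqrt_ratio_le {Z : W n} (hZ : Z ≠ 0) {μ : ℝ} (hμ : 0 < μ)
    (h : ∀ k, (Z.1 k ≠ 0 ∨ Z.2 k ≠ 0) → lam k ≤ μ) :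
    Real.sqrt (Q (T Z) / dualQ Q (T Z)) ≤ μ := by
  rw [hdiag, dual_eq hlam0 hT hdiag hZ]
  have hd := dQ_pos lam hlam0 hZ
  have hle : sQ lam Z ≤ μ ^ 2 * dQ lam Z := by
    rw [dQ, Finset.mul_sum, sQ]
    apply Finset.sum_le_sum
    intro k _
    by_cases hk : Z.1 k ≠ 0 ∨ Z.2 k ≠ 0
    · have h1 : lam k ≤ μ := h k hk
      have h2 : lam k * ((Z.1 k) ^ 2 + (Z.2 k) ^ 2)
          = lam k ^ 2 * ((lam k)⁻¹ * ((Z.1 k) ^ 2 + (Z.2 k) ^ 2)) := by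
        field_simp [(hlam0 k).ne']
      rw [h2]
      apply mul_le_mul_of_nonneg_right
      · exact pow_le_pow_left₀ (hlam0 k).le h1 2
      · exact mul_nonneg (inv_nonneg.2 (hlam0 k).le) (by positivity)
    · push_neg at hk
      rw [hk.1, hk.2]
      simp
  calc Real.sqrt (sQ lam Z / dQ lam Z) ≤ Real.sqrt (μ ^ 2) :=
        Real.sqrt_le_sqrt ((div_le_iff₀ hd).mpr (by linarith [hle]))
    _ = μ := Real.sqrt_sq hμ.le

lemma le_sqrt_ratio {Z : W n} (hZ : Z ≠ 0) {μ : ℝ} (hμ : 0 ≤ μ)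
    (h : ∀ k, (Z.1 k ≠ 0 ∨ Z.2 k ≠ 0) → μ ≤ lam k) :
    μ ≤ Real.sqrt (Q (T Z) / dualQ Q (T Z)) := by
  rw [hdiag, dual_eq hlam0 hT hdiag hZ]
  have hd := dQ_pos lam hlam0 hZ
  have hle : μ ^ 2 * dQ lam Z ≤ sQ lam Z := by
    rw [dQ, Finset.mul_sum, sQ]
    apply Finset.sum_le_sum
    intro k _
    by_cases hk : Z.1 k ≠ 0 ∨ Z.2 k ≠ 0
    · have h1 : μ ≤ lam k := h k hk
      have h2 : lam k * ((Z.1 k) ^ 2 + (Z.2 k) ^ 2)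
          = lam k ^ 2 * ((lam k)⁻¹ * ((Z.1 k) ^ 2 + (Z.2 k) ^ 2)) := by
        field_simp [(hlam0 k).ne']
      rw [h2]
      apply mul_le_mul_of_nonneg_right
      · exact pow_le_pow_left₀ hμ h1 2
      · exact mul_nonneg (inv_nonneg.2 (hlam0 k).le) (by positivity)
    · push_neg at hk
      rw [hk.1, hk.2]
      simp
  calc μ = Real.sqrt (μ ^ 2) := (Real.sqrt_sq hμ).symm
    _ ≤ _ := Real.sqrt_le_sqrt ((le_div_iff₀ hd).mpr (by linarith [hle]))

end dual


section mainproof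
variable {n : ℕ} {lam : Fin n → ℝ}

theorem statement11_aux (Q : W n → ℝ)
    (hpos : ∀ Z : W n, Z ≠ 0 → 0 < Q Z)
    (T : W n ≃ₗ[ℝ] W n) (hT : ∀ X Y : W n, symp (T X) (T Y) = symp X Y)
    (hlam0 : ∀ j, 0 < lam j)
    (hmono : ∀ j k : Fin n, j ≤ k → lam k ≤ lam j)
    (hdiag : ∀ Z : W n, Q (T Z) = ∑ j, lam j * ((Z.1 j) ^ 2 + (Z.2 j) ^ 2)) :
    ∀ j : Fin n, lam j =
      sInf {r : ℝ | ∃ Wj : Submodule ℝ (W n), IsSympSubspace Wj ∧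
        Module.finrank ℝ Wj = 2 * (n - (j : ℕ)) ∧
        r = ⨆ Y : {Y : Wj // (Y : W n) ≠ 0},
          Real.sqrt (Q (Y.1 : W n) / dualQ Q (Y.1 : W n))} := by
  intro j
  have hdiag' : ∀ Z : W n, Q (T Z) = sQ lam Z := hdiag
  have hn : 0 < n := j.pos
  set μ0 := lam ⟨0, hn⟩ with hμ0
  have hμ0pos : 0 < μ0 := hlam0 _
  have hglobal : ∀ Y : W n, Y ≠ 0 → Real.sqrt (Q Y / dualQ Q Y) ≤ μ0 := by
    intro Y hY
    obtain ⟨Z, rfl⟩ : ∃ Z, T Z = Y := ⟨T.symm Y, T.apply_symm_apply Y⟩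
    have hZ : Z ≠ 0 := fun h => hY (by rw [h, map_zero])
    refine sqrt_ratio_le hlam0 hT hdiag' hZ hμ0pos fun k _ => ?_
    exact hmono ⟨0, hn⟩ k (by simp [Fin.le_def])
  set S := {r : ℝ | ∃ Wj : Submodule ℝ (W n), IsSympSubspace Wj ∧
        Module.finrank ℝ Wj = 2 * (n - (j : ℕ)) ∧
        r = ⨆ Y : {Y : Wj // (Y : W n) ≠ 0},
          Real.sqrt (Q (Y.1 : W n) / dualQ Q (Y.1 : W n))} with hS
  have hWn : Module.finrank ℝ (W n) = 2 * n := by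
    rw [Module.finrank_prod, finrank_euclideanSpace, Fintype.card_fin]
    ring
  -- every element of S is at least lam j
  have hlb : ∀ r ∈ S, lam j ≤ r := by
    rintro r ⟨Wj, -, hdim, rfl⟩
    set Vj := Submodule.map (T : W n →ₗ[ℝ] W n) (coordSub n (Finset.Iic j)) with hVj
    have hVdim : Module.finrank ℝ Vj = 2 * ((j : ℕ) + 1) := by
      rw [hVj, LinearEquiv.finrank_map_eq, finrank_coordSub, Fin.card_Iic]
    have hposrk : 0 < Module.finrank ℝ (Wj ⊓ Vj : Submodule ℝ (W n)) := by
      have hsum := Submodule.finrank_sup_add_finrank_inf_eq Wj Vj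
      have hle : Module.finrank ℝ (Wj ⊔ Vj : Submodule ℝ (W n)) ≤ 2 * n :=
        hWn ▸ Submodule.finrank_le _
      have hjn : (j : ℕ) < n := j.isLt
      omega
    obtain ⟨Y, hYW, hY0⟩ : ∃ Y, Y ∈ Wj ⊓ Vj ∧ Y ≠ 0 := by
      apply Submodule.exists_mem_ne_zero_of_ne_bot
      intro h
      rw [h, finrank_bot] at hposrk
      exact lt_irrefl 0 hposrk
    obtain ⟨Z, hZmem, hZeq⟩ := Submodule.mem_map.mp hYW.2
    have hZeq' : T Z = Y := hZeq
    have hZ0 : Z ≠ 0 := fun h => hY0 (by rw [← hZeq', h, map_zero])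
    have hge : lam j ≤ Real.sqrt (Q (T Z) / dualQ Q (T Z)) := by
      refine le_sqrt_ratio hlam0 hT hdiag' hZ0 (hlam0 j).le fun k hk => ?_
      refine hmono k j ?_
      by_contra hkj
      have hknot : k ∉ Finset.Iic j := by simpa using hkj
      obtain ⟨h1, h2⟩ := hZmem k hknot
      rcases hk with h | h
      · exact h h1
      · exact h h2
    have hbdd : BddAbove (Set.range fun Y : {Y : Wj // (Y : W n) ≠ 0} =>
        Real.sqrt (Q (Y.1 : W n) / dualQ Q (Y.1 : W n))) :=
      ⟨μ0, by rintro _ ⟨Y, rfl⟩; exact hglobal _ Y.2⟩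
    have hY0' : ((⟨Y, hYW.1⟩ : Wj) : W n) ≠ 0 := hY0
    calc lam j ≤ Real.sqrt (Q (T Z) / dualQ Q (T Z)) := hge
      _ = Real.sqrt (Q Y / dualQ Q Y) := by rw [hZeq']
      _ ≤ _ := le_ciSup hbdd ⟨⟨Y, hYW.1⟩, hY0'⟩
  -- the witness subspace
  set Wst := Submodule.map (T : W n →ₗ[ℝ] W n) (coordSub n (Finset.Ici j)) with hWst
  have hWdim : Module.finrank ℝ Wst = 2 * (n - (j : ℕ)) := by
    rw [hWst, LinearEquiv.finrank_map_eq, finrank_coordSub, Fin.card_Ici]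
  have hWsymp : IsSympSubspace Wst := by
    intro Y hY hall
    obtain ⟨Z, hZmem, hZeq⟩ := Submodule.mem_map.mp hY
    have hZeq' : T Z = Y := hZeq
    set RZ : W n := (Z.2, -Z.1) with hRZ
    have hRZmem : RZ ∈ coordSub n (Finset.Ici j) := by
      intro k hk
      obtain ⟨h1, h2⟩ := hZmem k hk
      exact ⟨h2, by show -Z.1 k = 0; rw [h1, neg_zero]⟩
    have hTRZ : T RZ ∈ Wst := Submodule.mem_map_of_mem hRZmem
    have h0 : symp (T Z) (T RZ) = 0 := hZeq' ▸ hall (T RZ) hTRZ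
    rw [hT, symp] at h0
    have h0' : ∑ k, ((Z.1 k) ^ 2 + (Z.2 k) ^ 2) = 0 := by
      rw [← h0, ← Finset.sum_sub_distrib]
      apply Finset.sum_congr rfl
      intro k _
      show _ = RZ.1 k * Z.2 k - Z.1 k * RZ.2 k
      rw [hRZ]
      show (Z.1 k) ^ 2 + (Z.2 k) ^ 2 = Z.2 k * Z.2 k - Z.1 k * -Z.1 k
      ring
    have hZ0 : Z = 0 := by
      by_contra hZne
      obtain ⟨k, hk⟩ := exists_coord_ne hZne
      have hpos' : 0 < ∑ k, ((Z.1 k) ^ 2 + (Z.2 k) ^ 2) := by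
        apply Finset.sum_pos' (fun i _ => by positivity)
        exact ⟨k, Finset.mem_univ k, by rcases hk with h | h <;> positivity⟩
      rw [h0'] at hpos'
      exact lt_irrefl 0 hpos'
    rw [← hZeq', hZ0, map_zero]
  have hWne : Nonempty {Y : Wst // (Y : W n) ≠ 0} := by
    have hposrk : 0 < Module.finrank ℝ Wst := by
      rw [hWdim]; have := j.isLt; omega
    obtain ⟨Y, hYmem, hY0⟩ : ∃ Y, Y ∈ Wst ∧ Y ≠ 0 := by
      apply Submodule.exists_mem_ne_zero_of_ne_bot
      intro h
      rw [h, finrank_bot] at hposrk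
      exact lt_irrefl 0 hposrk
    exact ⟨⟨⟨Y, hYmem⟩, hY0⟩⟩
  set rst := ⨆ Y : {Y : Wst // (Y : W n) ≠ 0},
      Real.sqrt (Q (Y.1 : W n) / dualQ Q (Y.1 : W n)) with hrst
  have hmem : rst ∈ S := ⟨Wst, hWsymp, hWdim, rfl⟩
  have hub : rst ≤ lam j := by
    apply ciSup_le
    rintro ⟨⟨Y, hYmem⟩, hY0⟩
    obtain ⟨Z, hZmem, hZeq⟩ := Submodule.mem_map.mp hYmem
    have hZeq' : T Z = Y := hZeq
    have hZ0 : Z ≠ 0 := fun h => hY0 (show Y = 0 by rw [← hZeq', h, map_zero])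
    show Real.sqrt (Q Y / dualQ Q Y) ≤ lam j
    rw [← hZeq']
    refine sqrt_ratio_le hlam0 hT hdiag' hZ0 (hlam0 j) fun k hk => ?_
    refine hmono j k ?_
    by_contra hkj
    have hknot : k ∉ Finset.Ici j := by simpa using hkj
    obtain ⟨h1, h2⟩ := hZmem k hknot
    rcases hk with h | h
    · exact h h1
    · exact h h2
  have hSne : S.Nonempty := ⟨rst, hmem⟩
  have hSbdd : BddBelow S := ⟨lam j, fun r hr => hlb r hr⟩
  have h1 : sInf S ≤ lam j := le_trans (csInf_le hSbdd hmem) hub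
  have h2 : lam j ≤ sInf S := le_csInf hSne hlb
  linarith

end mainproof

/-- proof of Proposition `massinv`: the symplectic eigenvalues
`λ_j` of a positive definite quadratic form are given by the inf-sup formula over
symplectic subspaces, hence do not depend on the diagonalizing symplectic
coordinates. -/
theorem statement11 (n : ℕ) (Q : W n → ℝ)
    (B : W n →ₗ[ℝ] W n →ₗ[ℝ] ℝ) (hQB : ∀ Z : W n, Q Z = B Z Z)
    (hpos : ∀ Z : W n, Z ≠ 0 → 0 < Q Z)
    (T : W n ≃ₗ[ℝ] W n) (hT : ∀ X Y : W n, symp (T X) (T Y) = symp X Y)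
    (lam : Fin n → ℝ) (hlam0 : ∀ j, 0 < lam j)
    (hmono : ∀ j k : Fin n, j ≤ k → lam k ≤ lam j)
    (hdiag : ∀ Z : W n, Q (T Z) = ∑ j, lam j * ((Z.1 j) ^ 2 + (Z.2 j) ^ 2)) :
    ∀ j : Fin n, lam j =
      sInf {r : ℝ | ∃ Wj : Submodule ℝ (W n), IsSympSubspace Wj ∧
        Module.finrank ℝ Wj = 2 * (n - (j : ℕ)) ∧
        r = ⨆ Y : {Y : Wj // (Y : W n) ≠ 0},
          Real.sqrt (Q (Y.1 : W n) / dualQ Q (Y.1 : W n))} := by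
  intro j
  exact statement11_aux Q hpos T hT hlam0 hmono hdiag j

end
end

section
/- Let g be a Riemannian metric on W = ℝ^{2n} and for X ∈ W and 1 ≤ j ≤ n define λ_j(X) = inf over all symplectic subspaces W_j ⊆ ℝ^{2n} of dimension 2(n − j + 1) of sup_{Y ∈ W_j, Y ≠ 0} (g_X(Y)/g^σ_X(Y))^{1/2}, and Λ_g(X) = λ₁(X)⋯λ_n(X). Then: (a) if g is slowly varying, then each λ_j and Λ_g are g-continuous; (b) if g is slowly varying and σ-temperate, then each λ_j and Λ_g are (σ,g)-temperate. -/
open MeasureTheory Complex Filter Topology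
open scoped BigOperators ENNReal

noncomputable section

/-- The `j`-th symplectic eigenvalue of `g_X`, via the inf-sup characterization. -/
def lamJ {n : ℕ} (g : RMetric n) (j : Fin n) (X : W n) : ℝ :=
  sInf {r : ℝ | ∃ Wj : Submodule ℝ (W n), IsSympSubspace Wj ∧
    Module.finrank ℝ Wj = 2 * (n - (j : ℕ)) ∧
    r = ⨆ Y : {Y : Wj // (Y : W n) ≠ 0},
      Real.sqrt (g.val X (Y.1 : W n) / dualM g X (Y.1 : W n))}

/-- `Λ_g(X) = λ₁(X) ⋯ λ_n(X)`. -/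
def LambdaJ {n : ℕ} (g : RMetric n) (X : W n) : ℝ := ∏ j : Fin n, lamJ g j X

namespace S12

variable {n : ℕ} (g : RMetric n)

lemma val_zero (X : W n) : g.val X 0 = 0 := by
  obtain ⟨B, hB⟩ := g.quad X
  simp [hB]

lemma val_nonneg (X Z : W n) : 0 ≤ g.val X Z := by
  rcases eq_or_ne Z 0 with rfl | h
  · simp [val_zero]
  · exact (g.posdef X Z h).le

lemma val_smul (X : W n) (c : ℝ) (Z : W n) : g.val X (c • Z) = c ^ 2 * g.val X Z := by
  obtain ⟨B, hB⟩ := g.quad X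
  rw [hB, hB]
  have e1 : B (c • Z) = c • B Z := _root_.map_smul B c Z
  rw [e1, LinearMap.smul_apply, _root_.map_smul, smul_eq_mul, smul_eq_mul]
  ring

lemma val_continuous (X : W n) : Continuous fun Z : W n => g.val X Z := by
  obtain ⟨B, hB⟩ := g.quad X
  have hcont : Continuous fun Z : W n => (LinearMap.toContinuousLinearMap (B Z) : W n →L[ℝ] ℝ) :=
    LinearMap.continuous_of_finiteDimensional
      ((LinearMap.toContinuousLinearMap : (W n →ₗ[ℝ] ℝ) ≃ₗ[ℝ] (W n →L[ℝ] ℝ)).toLinearMap.comp B)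
  have h2 : Continuous fun Z : W n => (LinearMap.toContinuousLinearMap (B Z)) Z :=
    hcont.clm_apply continuous_id
  have h3 : (fun Z : W n => g.val X Z) = fun Z => (LinearMap.toContinuousLinearMap (B Z)) Z := by
    funext Z; rw [hB]; simp
  rw [h3]; exact h2

lemma nsq (x : V n) : ‖x‖ ^ 2 = ∑ j, x j * x j := by
  rw [EuclideanSpace.norm_eq, Real.sq_sqrt (by positivity)]
  exact Finset.sum_congr rfl fun j _ => by rw [Real.norm_eq_abs, _root_.sq_abs, pow_two]

lemma symp_sq_le (Y Z : W n) : symp Y Z ^ 2 ≤ 4 * (‖Y‖ ^ 2 * ‖Z‖ ^ 2) := by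
  have e : ∀ x : V n, (∑ j, x j ^ 2) = ‖x‖ ^ 2 := fun x => by
    rw [nsq]; exact Finset.sum_congr rfl fun j _ => pow_two (x j)
  have ha : (∑ j, Z.1 j * Y.2 j) ^ 2 ≤ (∑ j, Z.1 j ^ 2) * (∑ j, Y.2 j ^ 2) :=
    Finset.sum_mul_sq_le_sq_mul_sq _ _ _
  have hb : (∑ j, Y.1 j * Z.2 j) ^ 2 ≤ (∑ j, Y.1 j ^ 2) * (∑ j, Z.2 j ^ 2) :=
    Finset.sum_mul_sq_le_sq_mul_sq _ _ _
  rw [e, e] at ha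
  rw [e, e] at hb
  have c1 : ‖Z.1‖ ^ 2 ≤ ‖Z‖ ^ 2 := pow_le_pow_left₀ (norm_nonneg _) (norm_fst_le Z) 2
  have c2 : ‖Z.2‖ ^ 2 ≤ ‖Z‖ ^ 2 := pow_le_pow_left₀ (norm_nonneg _) (norm_snd_le Z) 2
  have c3 : ‖Y.1‖ ^ 2 ≤ ‖Y‖ ^ 2 := pow_le_pow_left₀ (norm_nonneg _) (norm_fst_le Y) 2
  have c4 : ‖Y.2‖ ^ 2 ≤ ‖Y‖ ^ 2 := pow_le_pow_left₀ (norm_nonneg _) (norm_snd_le Y) 2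
  have ha' : (∑ j, Z.1 j * Y.2 j) ^ 2 ≤ ‖Y‖ ^ 2 * ‖Z‖ ^ 2 := by
    refine ha.trans ?_
    calc ‖Z.1‖ ^ 2 * ‖Y.2‖ ^ 2 ≤ ‖Z‖ ^ 2 * ‖Y‖ ^ 2 :=
          mul_le_mul c1 c4 (sq_nonneg _) (sq_nonneg _)
      _ = ‖Y‖ ^ 2 * ‖Z‖ ^ 2 := mul_comm _ _
  have hb' : (∑ j, Y.1 j * Z.2 j) ^ 2 ≤ ‖Y‖ ^ 2 * ‖Z‖ ^ 2 :=
    hb.trans (mul_le_mul c3 c2 (sq_nonneg _) (sq_nonneg _))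
  have hsymp : symp Y Z = (∑ j, Z.1 j * Y.2 j) - ∑ j, Y.1 j * Z.2 j := rfl
  rw [hsymp]
  nlinarith [sq_nonneg ((∑ j, Z.1 j * Y.2 j) + ∑ j, Y.1 j * Z.2 j)]

lemma J_norm (Z : W n) : ‖((-Z.2, Z.1) : W n)‖ = ‖Z‖ := by
  rw [Prod.norm_def, Prod.norm_def]
  simp [max_comm]

lemma symp_J (Z : W n) : symp (-Z.2, Z.1) Z = ‖Z.1‖ ^ 2 + ‖Z.2‖ ^ 2 := by
  have h1 : ‖Z.1‖ ^ 2 = ∑ j, Z.1 j * Z.1 j := nsq _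
  have h2 : ‖Z.2‖ ^ 2 = ∑ j, Z.2 j * Z.2 j := nsq _
  rw [h1, h2]
  show (∑ j, Z.1 j * Z.1 j) - ∑ j, (-Z.2) j * Z.2 j = _
  have hneg : ∀ x, (-Z.2) x = -(Z.2 x) := fun x => rfl
  simp only [hneg, neg_mul, Finset.sum_neg_distrib, sub_neg_eq_add]

lemma norm_sq_le_pair (Z : W n) : ‖Z‖ ^ 2 ≤ ‖Z.1‖ ^ 2 + ‖Z.2‖ ^ 2 := by
  rw [Prod.norm_def]
  rcases max_cases ‖Z.1‖ ‖Z.2‖ with ⟨h1, -⟩ | ⟨h1, -⟩ <;> rw [h1] <;>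
    nlinarith [sq_nonneg ‖Z.1‖, sq_nonneg ‖Z.2‖]

lemma exists_coercive (X : W n) : ∃ ε > (0:ℝ), ∀ Z : W n, ε * ‖Z‖ ^ 2 ≤ g.val X Z := by
  by_cases hne : (Metric.sphere (0 : W n) 1).Nonempty
  · obtain ⟨z₀, hz₀, hmin⟩ :=
      (isCompact_sphere (0 : W n) 1).exists_isMinOn hne (val_continuous g X).continuousOn
    have hz₀n : ‖z₀‖ = 1 := by simpa using hz₀
    have hz₀0 : z₀ ≠ 0 := fun h => by simp [h] at hz₀n
    refine ⟨g.val X z₀, g.posdef X z₀ hz₀0, fun Z => ?_⟩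
    rcases eq_or_ne Z 0 with rfl | hZ
    · simp [val_zero]
    · have hn0 : ‖Z‖ ≠ 0 := norm_ne_zero_iff.mpr hZ
      have hu : ‖Z‖⁻¹ • Z ∈ Metric.sphere (0 : W n) 1 := by
        simp [mem_sphere_zero_iff_norm, norm_smul, abs_of_nonneg, inv_mul_cancel₀ hn0]
      have h1 := isMinOn_iff.mp hmin _ hu
      have h2 : g.val X Z = ‖Z‖ ^ 2 * g.val X (‖Z‖⁻¹ • Z) := by
        rw [val_smul]; field_simp
      rw [h2, mul_comm (g.val X z₀)]
      exact mul_le_mul_of_nonneg_left h1 (sq_nonneg _)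
  · refine ⟨1, one_pos, fun Z => ?_⟩
    rcases eq_or_ne Z 0 with rfl | hZ
    · simp [val_zero]
    · exact absurd ⟨‖Z‖⁻¹ • Z, by
        simp [mem_sphere_zero_iff_norm, norm_smul, abs_of_nonneg,
          inv_mul_cancel₀ (norm_ne_zero_iff.mpr hZ)]⟩ hne

lemma exists_upper (X : W n) : ∃ K > (0:ℝ), ∀ Z : W n, g.val X Z ≤ K * ‖Z‖ ^ 2 := by
  by_cases hne : (Metric.sphere (0 : W n) 1).Nonempty
  · obtain ⟨z₁, hz₁, hmax⟩ :=
      (isCompact_sphere (0 : W n) 1).exists_isMaxOn hne (val_continuous g X).continuousOn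
    have hz₁n : ‖z₁‖ = 1 := by simpa using hz₁
    have hz₁0 : z₁ ≠ 0 := fun h => by simp [h] at hz₁n
    refine ⟨g.val X z₁, g.posdef X z₁ hz₁0, fun Z => ?_⟩
    rcases eq_or_ne Z 0 with rfl | hZ
    · simp [val_zero]
    · have hn0 : ‖Z‖ ≠ 0 := norm_ne_zero_iff.mpr hZ
      have hu : ‖Z‖⁻¹ • Z ∈ Metric.sphere (0 : W n) 1 := by
        simp [mem_sphere_zero_iff_norm, norm_smul, abs_of_nonneg, inv_mul_cancel₀ hn0]
      have h1 := isMaxOn_iff.mp hmax _ hu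
      have h2 : g.val X Z = ‖Z‖ ^ 2 * g.val X (‖Z‖⁻¹ • Z) := by
        rw [val_smul]; field_simp
      rw [h2, mul_comm (g.val X z₁)]
      exact mul_le_mul_of_nonneg_left h1 (sq_nonneg _)
  · refine ⟨1, one_pos, fun Z => ?_⟩
    rcases eq_or_ne Z 0 with rfl | hZ
    · simp [val_zero]
    · exact absurd ⟨‖Z‖⁻¹ • Z, by
        simp [mem_sphere_zero_iff_norm, norm_smul, abs_of_nonneg,
          inv_mul_cancel₀ (norm_ne_zero_iff.mpr hZ)]⟩ hne

lemma dual_bddAbove (X Z : W n) :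
    BddAbove (Set.range fun Y : {Y : W n // Y ≠ 0} => symp Y.1 Z ^ 2 / g.val X Y.1) := by
  obtain ⟨ε, hε, hco⟩ := exists_coercive g X
  refine ⟨4 * ‖Z‖ ^ 2 / ε, ?_⟩
  rintro r ⟨⟨Y, hY⟩, rfl⟩
  have hgp : 0 < g.val X Y := g.posdef X Y hY
  have h1 : symp Y Z ^ 2 ≤ 4 * (‖Y‖ ^ 2 * ‖Z‖ ^ 2) := symp_sq_le Y Z
  have h2 : ε * ‖Y‖ ^ 2 ≤ g.val X Y := hco Y
  show symp Y Z ^ 2 / g.val X Y ≤ 4 * ‖Z‖ ^ 2 / ε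
  rw [div_le_div_iff₀ hgp hε]
  nlinarith [mul_le_mul_of_nonneg_right h1 hε.le,
    mul_le_mul_of_nonneg_left h2 (by positivity : (0:ℝ) ≤ 4 * ‖Z‖ ^ 2)]

lemma dual_nonneg (X Z : W n) : 0 ≤ dualM g X Z :=
  Real.iSup_nonneg fun Y => div_nonneg (sq_nonneg _) (val_nonneg g X Y.1)

lemma dual_le (X₁ X₂ : W n) (A : ℝ) (hA : 0 < A)
    (h : ∀ Z, g.val X₁ Z ≤ A * g.val X₂ Z) (Z : W n) :
    dualM g X₂ Z ≤ A * dualM g X₁ Z := by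
  by_cases hne : Nonempty {Y : W n // Y ≠ 0}
  · haveI := hne
    refine ciSup_le fun Y => ?_
    obtain ⟨Y, hY⟩ := Y
    have h1 : 0 < g.val X₁ Y := g.posdef _ _ hY
    have h2 : 0 < g.val X₂ Y := g.posdef _ _ hY
    have step : symp Y Z ^ 2 / g.val X₂ Y ≤ A * (symp Y Z ^ 2 / g.val X₁ Y) := by
      have w : symp Y Z ^ 2 / g.val X₂ Y ≤ (A * symp Y Z ^ 2) / g.val X₁ Y := by
        rw [div_le_div_iff₀ h2 h1]
        nlinarith [mul_le_mul_of_nonneg_left (h Y) (sq_nonneg (symp Y Z))]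
      simpa [mul_div_assoc] using w
    exact step.trans (mul_le_mul_of_nonneg_left
      (le_ciSup (dual_bddAbove g X₁ Z) ⟨Y, hY⟩) hA.le)
  · haveI : IsEmpty {Y : W n // Y ≠ 0} := not_nonempty_iff.mp hne
    show (⨆ Y : {Y : W n // Y ≠ 0}, symp Y.1 Z ^ 2 / g.val X₂ Y.1) ≤
      A * ⨆ Y : {Y : W n // Y ≠ 0}, symp Y.1 Z ^ 2 / g.val X₁ Y.1
    rw [Real.iSup_of_isEmpty, Real.iSup_of_isEmpty, mul_zero]

lemma dual_pos (X Z : W n) (hZ : Z ≠ 0) : 0 < dualM g X Z := by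
  set Y₀ : W n := (-Z.2, Z.1) with hY₀def
  have hnorm : ‖Y₀‖ = ‖Z‖ := J_norm Z
  have hY₀ : Y₀ ≠ 0 := by
    intro h; apply hZ
    rw [← norm_eq_zero, ← hnorm, h, norm_zero]
  have hg0 : 0 < g.val X Y₀ := g.posdef _ _ hY₀
  have hs : symp Y₀ Z = ‖Z.1‖ ^ 2 + ‖Z.2‖ ^ 2 := symp_J Z
  have hZn : 0 < ‖Z‖ := norm_pos_iff.mpr hZ
  have hpos : 0 < symp Y₀ Z ^ 2 / g.val X Y₀ := by
    apply div_pos _ hg0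
    rw [hs]
    have hsum : 0 < ‖Z.1‖ ^ 2 + ‖Z.2‖ ^ 2 := lt_of_lt_of_le (pow_pos hZn 2) (norm_sq_le_pair Z)
    exact pow_pos hsum 2
  exact hpos.trans_le (le_ciSup (dual_bddAbove g X Z) ⟨Y₀, hY₀⟩)

lemma dual_lower (X : W n) (K : ℝ) (hK : 0 < K) (hup : ∀ Z, g.val X Z ≤ K * ‖Z‖ ^ 2)
    (Z : W n) (hZ : Z ≠ 0) : ‖Z‖ ^ 2 / K ≤ dualM g X Z := by
  set Y₀ : W n := (-Z.2, Z.1) with hY₀def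
  have hnorm : ‖Y₀‖ = ‖Z‖ := J_norm Z
  have hY₀ : Y₀ ≠ 0 := by
    intro h; apply hZ
    rw [← norm_eq_zero, ← hnorm, h, norm_zero]
  have hg0 : 0 < g.val X Y₀ := g.posdef _ _ hY₀
  have hs : symp Y₀ Z = ‖Z.1‖ ^ 2 + ‖Z.2‖ ^ 2 := symp_J Z
  have hZn : 0 < ‖Z‖ := norm_pos_iff.mpr hZ
  have hb : g.val X Y₀ ≤ K * ‖Z‖ ^ 2 := by
    have := hup Y₀; rwa [hnorm] at this
  have hle1 : ‖Z‖ ^ 2 / K ≤ symp Y₀ Z ^ 2 / g.val X Y₀ := by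
    have e : ‖Z‖ ^ 2 / K = ‖Z‖ ^ 2 * ‖Z‖ ^ 2 / (K * ‖Z‖ ^ 2) := by
      rw [mul_comm K, mul_div_mul_left _ _ (by positivity : (‖Z‖:ℝ) ^ 2 ≠ 0)]
    rw [e, hs]
    apply div_le_div₀ (sq_nonneg _) _ hg0 hb
    nlinarith [norm_sq_le_pair Z, sq_nonneg ‖Z‖]
  exact hle1.trans (le_ciSup (dual_bddAbove g X Z) ⟨Y₀, hY₀⟩)

lemma dual_neg (X Z : W n) : dualM g X (-Z) = dualM g X Z := by
  show (⨆ Y : {Y : W n // Y ≠ 0}, symp Y.1 (-Z) ^ 2 / g.val X Y.1) =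
    ⨆ Y : {Y : W n // Y ≠ 0}, symp Y.1 Z ^ 2 / g.val X Y.1
  congr 1
  funext Y
  have hsn : symp Y.1 (-Z) = - symp Y.1 Z := by
    show (∑ j, (-Z).1 j * Y.1.2 j) - ∑ j, Y.1.1 j * (-Z).2 j = _
    have e1 : ∀ j, ((-Z).1 : V n) j = -(Z.1 j) := fun j => rfl
    have e2 : ∀ j, ((-Z).2 : V n) j = -(Z.2 j) := fun j => rfl
    simp only [e1, e2, neg_mul, mul_neg, Finset.sum_neg_distrib]
    rw [show symp Y.1 Z = (∑ j, Z.1 j * (Y.1).2 j) - ∑ j, (Y.1).1 j * Z.2 j from rfl]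
    ring
  rw [hsn, neg_sq]

lemma sqrt_ratio_le (X : W n) :
    ∃ K ≥ (1:ℝ), ∀ Z : W n, Z ≠ 0 → Real.sqrt (g.val X Z / dualM g X Z) ≤ K := by
  obtain ⟨K, hK, hup⟩ := exists_upper g X
  refine ⟨max K 1, le_max_right _ _, fun Z hZ => ?_⟩
  have hd : ‖Z‖ ^ 2 / K ≤ dualM g X Z := dual_lower g X K hK hup Z hZ
  have hdp : 0 < dualM g X Z := dual_pos g X Z hZ
  have hratio : g.val X Z / dualM g X Z ≤ K ^ 2 := by
    rw [div_le_iff₀ hdp]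
    calc g.val X Z ≤ K * ‖Z‖ ^ 2 := hup Z
      _ = K ^ 2 * (‖Z‖ ^ 2 / K) := by field_simp
      _ ≤ K ^ 2 * dualM g X Z := mul_le_mul_of_nonneg_left hd (by positivity)
  calc Real.sqrt (g.val X Z / dualM g X Z) ≤ Real.sqrt (K ^ 2) := Real.sqrt_le_sqrt hratio
    _ = K := Real.sqrt_sq hK.le
    _ ≤ max K 1 := le_max_left _ _

/-- The sup over nonzero vectors of a subspace of `sqrt(g/g^σ)`. -/
def valW (g : RMetric n) (X : W n) (Wj : Submodule ℝ (W n)) : ℝ :=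
  ⨆ Y : {Y : Wj // (Y : W n) ≠ 0},
    Real.sqrt (g.val X (Y.1 : W n) / dualM g X (Y.1 : W n))

lemma valW_nonneg (X : W n) (Wj : Submodule ℝ (W n)) : 0 ≤ valW g X Wj :=
  Real.iSup_nonneg fun _ => Real.sqrt_nonneg _

lemma valW_bdd (X : W n) (Wj : Submodule ℝ (W n)) :
    BddAbove (Set.range fun Y : {Y : Wj // (Y : W n) ≠ 0} =>
      Real.sqrt (g.val X (Y.1 : W n) / dualM g X (Y.1 : W n))) := by
  obtain ⟨K, _, hK⟩ := sqrt_ratio_le g X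
  exact ⟨K, by rintro r ⟨Y, rfl⟩; exact hK _ Y.2⟩

lemma valW_le (X Y : W n) (A : ℝ) (hA : 0 < A)
    (h1 : ∀ Z, g.val X Z ≤ A * g.val Y Z) (h2 : ∀ Z, g.val Y Z ≤ A * g.val X Z)
    (Wj : Submodule ℝ (W n)) : valW g X Wj ≤ A * valW g Y Wj := by
  by_cases hne : Nonempty {Z : Wj // (Z : W n) ≠ 0}
  · haveI := hne
    refine ciSup_le fun Z => ?_
    obtain ⟨Z, hZ⟩ := Z
    set Z' := (Z : W n) with hZ'def
    have hdX : 0 < dualM g X Z' := dual_pos g X Z' hZ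
    have hdY : 0 < dualM g Y Z' := dual_pos g Y Z' hZ
    have hgY : 0 < g.val Y Z' := g.posdef Y Z' hZ
    have hdc : dualM g Y Z' ≤ A * dualM g X Z' := dual_le g X Y A hA h1 Z'
    have hr : g.val X Z' / dualM g X Z' ≤ A ^ 2 * (g.val Y Z' / dualM g Y Z') := by
      have key : g.val X Z' * dualM g Y Z' ≤ A ^ 2 * g.val Y Z' * dualM g X Z' := by
        nlinarith [mul_le_mul (h1 Z') hdc (dual_nonneg g Y Z')
          (mul_nonneg hA.le (val_nonneg g Y Z'))]
      rw [div_le_iff₀ hdX, show A ^ 2 * (g.val Y Z' / dualM g Y Z') * dualM g X Z' =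
        (A ^ 2 * g.val Y Z' * dualM g X Z') / dualM g Y Z' from by ring, le_div_iff₀ hdY]
      nlinarith [key]
    calc Real.sqrt (g.val X Z' / dualM g X Z')
        ≤ Real.sqrt (A ^ 2 * (g.val Y Z' / dualM g Y Z')) := Real.sqrt_le_sqrt hr
      _ = A * Real.sqrt (g.val Y Z' / dualM g Y Z') := by
          rw [Real.sqrt_mul (sq_nonneg A), Real.sqrt_sq hA.le]
      _ ≤ A * valW g Y Wj :=
          mul_le_mul_of_nonneg_left (le_ciSup (valW_bdd g Y Wj) ⟨Z, hZ⟩) hA.le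
  · haveI : IsEmpty {Z : Wj // (Z : W n) ≠ 0} := not_nonempty_iff.mp hne
    rw [valW, valW, Real.iSup_of_isEmpty, Real.iSup_of_isEmpty, mul_zero]

/-- The set over which `lamJ` takes an infimum. -/
def SetJ (g : RMetric n) (j : Fin n) (X : W n) : Set ℝ :=
  {r : ℝ | ∃ Wj : Submodule ℝ (W n), IsSympSubspace Wj ∧
    Module.finrank ℝ Wj = 2 * (n - (j : ℕ)) ∧ r = valW g X Wj}

lemma lamJ_eq (j : Fin n) (X : W n) : lamJ g j X = sInf (SetJ g j X) := rfl

lemma SetJ_bddBelow (j : Fin n) (X : W n) : BddBelow (SetJ g j X) := by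
  refine ⟨0, ?_⟩
  rintro r ⟨Wj, -, -, rfl⟩
  exact valW_nonneg g X Wj

lemma lamJ_nonneg (j : Fin n) (X : W n) : 0 ≤ lamJ g j X := by
  rw [lamJ_eq]
  exact Real.sInf_nonneg (by rintro r ⟨Wj, -, -, rfl⟩; exact valW_nonneg g X Wj)

lemma lamJ_le (X Y : W n) (A : ℝ) (hA : 0 < A)
    (h1 : ∀ Z, g.val X Z ≤ A * g.val Y Z) (h2 : ∀ Z, g.val Y Z ≤ A * g.val X Z)
    (j : Fin n) : lamJ g j X ≤ A * lamJ g j Y := by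
  rw [lamJ_eq, lamJ_eq]
  by_cases hS : (SetJ g j Y).Nonempty
  · have hle : ∀ b ∈ SetJ g j Y, sInf (SetJ g j X) / A ≤ b := by
      rintro b ⟨Wj, hW1, hW2, rfl⟩
      rw [div_le_iff₀ hA]
      calc sInf (SetJ g j X) ≤ valW g X Wj :=
            csInf_le (SetJ_bddBelow g j X) ⟨Wj, hW1, hW2, rfl⟩
        _ ≤ A * valW g Y Wj := valW_le g X Y A hA h1 h2 Wj
        _ = valW g Y Wj * A := mul_comm _ _
    have h := le_csInf hS hle
    rw [div_le_iff₀ hA] at h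
    linarith [h]
  · have hSX : SetJ g j X = ∅ := by
      rw [Set.eq_empty_iff_forall_notMem]
      rintro r ⟨Wj, h1', h2', -⟩
      exact hS ⟨valW g Y Wj, Wj, h1', h2', rfl⟩
    rw [hSX, Set.not_nonempty_iff_eq_empty.mp hS, Real.sInf_empty, mul_zero]

end S12


/-- Proposition `massinv`(2),(3): if `g` is slowly varying then
the `λ_j` and `Λ_g` are `g`-continuous; if `g` is moreover `σ`-temperate, they are
`(σ,g)`-temperate. -/
theorem statement12 (n : ℕ) (g : RMetric n) :
    (IsSlowlyVarying g →
      (∀ j : Fin n, IsGCont g (lamJ g j)) ∧ IsGCont g (LambdaJ g)) ∧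
    (IsSlowlyVarying g → IsSigmaTemperate g →
      (∀ j : Fin n, IsSGTemperate g (lamJ g j)) ∧ IsSGTemperate g (LambdaJ g)) := by
  constructor
  · intro hsv
    obtain ⟨c, hc, C, hC, hsv⟩ := hsv
    have hcomp : ∀ X Y : W n, g.val X (Y - X) ≤ c →
        (∀ Z, g.val X Z ≤ C * g.val Y Z) ∧ (∀ Z, g.val Y Z ≤ C * g.val X Z) := by
      intro X Y h
      refine ⟨fun Z => (hsv X Y h Z).2, fun Z => ?_⟩
      have h' := (hsv X Y h Z).1
      rwa [inv_mul_le_iff₀ hC] at h'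
    have hkey : ∀ X Y : W n, g.val X (Y - X) ≤ c → ∀ j : Fin n,
        lamJ g j X ≤ C * lamJ g j Y ∧ lamJ g j Y ≤ C * lamJ g j X := fun X Y h j =>
      ⟨S12.lamJ_le g X Y C hC (hcomp X Y h).1 (hcomp X Y h).2 j,
       S12.lamJ_le g Y X C hC (hcomp X Y h).2 (hcomp X Y h).1 j⟩
    constructor
    · intro j
      refine ⟨c, hc, C, hC, fun X Y h => ⟨?_, (hkey X Y h j).1⟩⟩
      rw [inv_mul_le_iff₀ hC]
      exact (hkey X Y h j).2
    · refine ⟨c, hc, C ^ n, pow_pos hC n, fun X Y h => ?_⟩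
      have hxy : LambdaJ g X ≤ C ^ n * LambdaJ g Y := by
        unfold LambdaJ
        calc (∏ j : Fin n, lamJ g j X) ≤ ∏ j : Fin n, (C * lamJ g j Y) :=
              Finset.prod_le_prod (fun j _ => S12.lamJ_nonneg g j X)
                (fun j _ => (hkey X Y h j).1)
          _ = C ^ n * ∏ j : Fin n, lamJ g j Y := by
              rw [Finset.prod_mul_distrib, Finset.prod_const, Finset.card_univ,
                Fintype.card_fin]
      have hyx : LambdaJ g Y ≤ C ^ n * LambdaJ g X := by
        unfold LambdaJ
        calc (∏ j : Fin n, lamJ g j Y) ≤ ∏ j : Fin n, (C * lamJ g j X) :=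
              Finset.prod_le_prod (fun j _ => S12.lamJ_nonneg g j Y)
                (fun j _ => (hkey X Y h j).2)
          _ = C ^ n * ∏ j : Fin n, lamJ g j X := by
              rw [Finset.prod_mul_distrib, Finset.prod_const, Finset.card_univ,
                Fintype.card_fin]
      exact ⟨by rw [inv_mul_le_iff₀ (pow_pos hC n)]; exact hyx, hxy⟩
  · intro _ hT
    obtain ⟨C, hC, N, hT⟩ := hT
    set C₂ := max C 1 with hC₂def
    have hC₂ : (1:ℝ) ≤ C₂ := le_max_right _ _
    have hC₂0 : (0:ℝ) < C₂ := lt_of_lt_of_le one_pos hC₂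
    have hT' : ∀ X Y Z : W n, g.val Y Z ≤ C₂ * g.val X Z * (1 + dualM g Y (X - Y)) ^ N := by
      intro X Y Z
      refine (hT X Y Z).trans ?_
      have hnn : (0:ℝ) ≤ g.val X Z * (1 + dualM g Y (X - Y)) ^ N :=
        mul_nonneg (S12.val_nonneg g X Z)
          (pow_nonneg (by linarith [S12.dual_nonneg g Y (X - Y)]) N)
      rw [mul_assoc, mul_assoc]
      exact mul_le_mul_of_nonneg_right (le_max_left C 1) hnn
    have hkey : ∀ X Y : W n, ∀ j : Fin n,
        lamJ g j X ≤ C₂ ^ (N + 2) * lamJ g j Y * (1 + dualM g X (X - Y)) ^ (N * (N + 2)) ∧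
        lamJ g j X ≤ C₂ ^ (N + 2) * lamJ g j Y * (1 + dualM g Y (X - Y)) ^ (N * (N + 2)) := by
      intro X Y j
      set dX := dualM g X (X - Y) with hdXdef
      set dY := dualM g Y (X - Y) with hdYdef
      have hdX0 : 0 ≤ dX := S12.dual_nonneg g X (X - Y)
      have hdY0 : 0 ≤ dY := S12.dual_nonneg g Y (X - Y)
      set DX := C₂ * (1 + dX) ^ N with hDXdef
      set DY := C₂ * (1 + dY) ^ N with hDYdef
      have hpX : (1:ℝ) ≤ (1 + dX) ^ N := one_le_pow₀ (by linarith)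
      have hpY : (1:ℝ) ≤ (1 + dY) ^ N := one_le_pow₀ (by linarith)
      have hDX1 : (1:ℝ) ≤ DX := by
        calc (1:ℝ) ≤ (1 + dX) ^ N := hpX
          _ ≤ C₂ * (1 + dX) ^ N := le_mul_of_one_le_left (by positivity) hC₂
      have hDY1 : (1:ℝ) ≤ DY := by
        calc (1:ℝ) ≤ (1 + dY) ^ N := hpY
          _ ≤ C₂ * (1 + dY) ^ N := le_mul_of_one_le_left (by positivity) hC₂
      have hDX0 : (0:ℝ) < DX := lt_of_lt_of_le one_pos hDX1
      have hDY0 : (0:ℝ) < DY := lt_of_lt_of_le one_pos hDY1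
      have hXY : ∀ Z, g.val X Z ≤ DX * g.val Y Z := by
        intro Z
        have h := hT' Y X Z
        have e : dualM g X (Y - X) = dX := by
          rw [hdXdef, ← S12.dual_neg g X (X - Y), neg_sub]
        rw [e] at h
        rw [show DX * g.val Y Z = C₂ * g.val Y Z * (1 + dX) ^ N from by
          rw [hDXdef]; ring]
        exact h
      have hYX : ∀ Z, g.val Y Z ≤ DY * g.val X Z := by
        intro Z
        have h := hT' X Y Z
        rw [show DY * g.val X Z = C₂ * g.val X Z * (1 + dY) ^ N from by
          rw [hDYdef]; ring]
        exact h
      set A := DX * DY with hAdef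
      have hA0 : (0:ℝ) < A := mul_pos hDX0 hDY0
      have h1 : ∀ Z, g.val X Z ≤ A * g.val Y Z := by
        intro Z
        refine (hXY Z).trans ?_
        have hg0 : 0 ≤ g.val Y Z := S12.val_nonneg g Y Z
        nlinarith [mul_nonneg (le_trans zero_le_one hDX1) hg0]
      have h2 : ∀ Z, g.val Y Z ≤ A * g.val X Z := by
        intro Z
        refine (hYX Z).trans ?_
        have hg0 : 0 ≤ g.val X Z := S12.val_nonneg g X Z
        nlinarith [mul_nonneg (le_trans zero_le_one hDY1) hg0]
      have hlam : lamJ g j X ≤ A * lamJ g j Y := S12.lamJ_le g X Y A hA0 h1 h2 j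
      have hdual1 : dX ≤ DY * dY := S12.dual_le g Y X DY hDY0 hYX (X - Y)
      have hdual2 : dY ≤ DX * dX := S12.dual_le g X Y DX hDX0 hXY (X - Y)
      have hA_X : A ≤ C₂ ^ (N + 2) * (1 + dX) ^ (N * (N + 2)) := by
        have e1 : 1 + dY ≤ DX * (1 + dX) := by nlinarith
        have e2 : DY ≤ C₂ * (DX * (1 + dX)) ^ N := by
          rw [hDYdef]
          exact mul_le_mul_of_nonneg_left (pow_le_pow_left₀ (by linarith) e1 N) hC₂0.le
        calc A = DX * DY := hAdef
          _ ≤ DX * (C₂ * (DX * (1 + dX)) ^ N) :=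
              mul_le_mul_of_nonneg_left e2 (by linarith)
          _ = C₂ * DX ^ (N + 1) * (1 + dX) ^ N := by rw [mul_pow]; ring
          _ = C₂ ^ (N + 2) * (1 + dX) ^ (N * (N + 2)) := by
              rw [hDXdef, mul_pow, ← pow_mul]; ring
      have hA_Y : A ≤ C₂ ^ (N + 2) * (1 + dY) ^ (N * (N + 2)) := by
        have e1 : 1 + dX ≤ DY * (1 + dY) := by nlinarith
        have e2 : DX ≤ C₂ * (DY * (1 + dY)) ^ N := by
          rw [hDXdef]
          exact mul_le_mul_of_nonneg_left (pow_le_pow_left₀ (by linarith) e1 N) hC₂0.le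
        calc A = DX * DY := hAdef
          _ ≤ (C₂ * (DY * (1 + dY)) ^ N) * DY :=
              mul_le_mul_of_nonneg_right e2 (by linarith)
          _ = C₂ * DY ^ (N + 1) * (1 + dY) ^ N := by rw [mul_pow]; ring
          _ = C₂ ^ (N + 2) * (1 + dY) ^ (N * (N + 2)) := by
              rw [hDYdef, mul_pow, ← pow_mul]; ring
      have hlY : 0 ≤ lamJ g j Y := S12.lamJ_nonneg g j Y
      constructor
      · calc lamJ g j X ≤ A * lamJ g j Y := hlam
          _ ≤ (C₂ ^ (N + 2) * (1 + dX) ^ (N * (N + 2))) * lamJ g j Y :=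
              mul_le_mul_of_nonneg_right hA_X hlY
          _ = C₂ ^ (N + 2) * lamJ g j Y * (1 + dX) ^ (N * (N + 2)) := by ring
      · calc lamJ g j X ≤ A * lamJ g j Y := hlam
          _ ≤ (C₂ ^ (N + 2) * (1 + dY) ^ (N * (N + 2))) * lamJ g j Y :=
              mul_le_mul_of_nonneg_right hA_Y hlY
          _ = C₂ ^ (N + 2) * lamJ g j Y * (1 + dY) ^ (N * (N + 2)) := by ring
    constructor
    · intro j
      exact ⟨C₂ ^ (N + 2), pow_pos hC₂0 _, N * (N + 2), fun X Y => hkey X Y j⟩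
    · refine ⟨(C₂ ^ (N + 2)) ^ n, pow_pos (pow_pos hC₂0 _) n, N * (N + 2) * n,
        fun X Y => ?_⟩
      constructor
      · unfold LambdaJ
        calc (∏ j : Fin n, lamJ g j X)
            ≤ ∏ j : Fin n, (C₂ ^ (N + 2) * lamJ g j Y * (1 + dualM g X (X - Y)) ^ (N * (N + 2))) :=
              Finset.prod_le_prod (fun j _ => S12.lamJ_nonneg g j X)
                (fun j _ => (hkey X Y j).1)
          _ = (C₂ ^ (N + 2)) ^ n * (∏ j : Fin n, lamJ g j Y) *
              (1 + dualM g X (X - Y)) ^ (N * (N + 2) * n) := by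
              rw [Finset.prod_mul_distrib, Finset.prod_mul_distrib, Finset.prod_const,
                Finset.prod_const, Finset.card_univ, Fintype.card_fin, ← pow_mul, ← pow_mul]
      · unfold LambdaJ
        calc (∏ j : Fin n, lamJ g j X)
            ≤ ∏ j : Fin n, (C₂ ^ (N + 2) * lamJ g j Y * (1 + dualM g Y (X - Y)) ^ (N * (N + 2))) :=
              Finset.prod_le_prod (fun j _ => S12.lamJ_nonneg g j X)
                (fun j _ => (hkey X Y j).2)
          _ = (C₂ ^ (N + 2)) ^ n * (∏ j : Fin n, lamJ g j Y) *
              (1 + dualM g Y (X - Y)) ^ (N * (N + 2) * n) := by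
              rw [Finset.prod_mul_distrib, Finset.prod_mul_distrib, Finset.prod_const,
                Finset.prod_const, Finset.card_univ, Fintype.card_fin, ← pow_mul, ← pow_mul]

end
end

section
/- Let r, s ∈ ℝ and ρ, δ ∈ ℝ^{2n}, and define on W = ℝ^{2n} the Riemannian metric g_{(x,ξ)}(y,η) = Σ_{j=1}^n ⟨x⟩^{−2ρ_{n+j}} ⟨ξ⟩^{2δ_j} y_j² + Σ_{j=1}^n ⟨x⟩^{2δ_{n+j}} ⟨ξ⟩^{−2ρ_j} η_j² and the weight m(x,ξ) = ⟨x⟩^s ⟨ξ⟩^r, where ⟨x⟩ = (1+|x|²)^{1/2}. Then: g is splitted; the dual metric is g^σ_{(x,ξ)}(y,η) = Σ_{j=1}^n ⟨x⟩^{−2δ_{n+j}} ⟨ξ⟩^{2ρ_j} y_j² + Σ_{j=1}^n ⟨x⟩^{2ρ_{n+j}} ⟨ξ⟩^{−2δ_j} η_j²; the Planck function is h_g(x,ξ) = max_{1 ≤ j ≤ n} ⟨x⟩^{δ_{n+j} − ρ_{n+j}} ⟨ξ⟩^{δ_j − ρ_j}; if ρ ≤ 1 and 0 ≤ δ (componentwise)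 then g is slowly varying and m is g-continuous; if 0 ≤ δ ≤ ρ ≤ 1 (componentwise) then g is feasible; and if moreover δ < 1 (componentwise) then g is strongly feasible. -/
open MeasureTheory Complex Filter Topology
open scoped BigOperators ENNReal

noncomputable section

/-- The japanese bracket `⟨x⟩ = (1 + |x|²)^{1/2}`. -/
def jap {n : ℕ} (x : V n) : ℝ := Real.sqrt (1 + ‖x‖ ^ 2)

namespace St17

lemma one_le_jap {n : ℕ} (x : V n) : 1 ≤ jap x := by
  rw [jap]
  exact (Real.le_sqrt (by norm_num) (by positivity)).mpr (by nlinarith [sq_nonneg ‖x‖])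

lemma jap_pos {n : ℕ} (x : V n) : 0 < jap x := lt_of_lt_of_le one_pos (one_le_jap x)

lemma jap_nonneg {n : ℕ} (x : V n) : 0 ≤ jap x := (jap_pos x).le

lemma norm_le_jap {n : ℕ} (x : V n) : ‖x‖ ≤ jap x := by
  rw [jap]
  have h := Real.sq_sqrt (show (0:ℝ) ≤ 1 + ‖x‖^2 by positivity)
  nlinarith [Real.sqrt_nonneg (1 + ‖x‖^2), norm_nonneg x]

lemma jap_le_add {n : ℕ} (x y : V n) : jap x ≤ jap y + ‖x - y‖ := by
  have h1 : ‖x‖ ≤ ‖y‖ + ‖x - y‖ := by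
    calc ‖x‖ = ‖y + (x - y)‖ := by rw [add_sub_cancel]
      _ ≤ ‖y‖ + ‖x - y‖ := norm_add_le _ _
  have hc : (0:ℝ) ≤ ‖x - y‖ := norm_nonneg _
  have hy : ‖y‖ ≤ jap y := norm_le_jap y
  have hyn : (0:ℝ) ≤ ‖y‖ := norm_nonneg _
  have h2 : jap x ≤ Real.sqrt ((jap y + ‖x - y‖)^2) := by
    rw [jap]
    refine Real.sqrt_le_sqrt ?_
    have hjy := Real.sq_sqrt (show (0:ℝ) ≤ 1 + ‖y‖^2 by positivity)
    rw [jap] at hy ⊢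
    have hx2 : ‖x‖^2 ≤ (‖y‖ + ‖x - y‖)^2 := by nlinarith [norm_nonneg x]
    have hprod : 0 ≤ (Real.sqrt (1 + ‖y‖^2) - ‖y‖) * ‖x - y‖ :=
      mul_nonneg (by linarith) hc
    nlinarith
  calc jap x ≤ Real.sqrt ((jap y + ‖x - y‖)^2) := h2
    _ = jap y + ‖x - y‖ := Real.sqrt_sq (add_nonneg (jap_nonneg y) (norm_nonneg _))

lemma rpow_comp_le {t K e E : ℝ} (ht : 0 < t) (hK : 1 ≤ K) (h1 : t ≤ K) (h2 : t⁻¹ ≤ K)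
    (hE : |e| ≤ E) : t ^ e ≤ K ^ E := by
  have hE0 : 0 ≤ E := (abs_nonneg e).trans hE
  rcases le_or_gt 1 t with h | h
  · calc t ^ e ≤ t ^ |e| := Real.rpow_le_rpow_of_exponent_le h (le_abs_self e)
      _ ≤ K ^ |e| := Real.rpow_le_rpow (by linarith) h1 (abs_nonneg e)
      _ ≤ K ^ E := Real.rpow_le_rpow_of_exponent_le hK hE
  · have ht1 : 1 ≤ t⁻¹ := one_le_inv_iff₀.mpr ⟨ht, h.le⟩
    have heq : t ^ e = t⁻¹ ^ (-e) := by
      rw [Real.rpow_neg (inv_nonneg.mpr ht.le), Real.inv_rpow ht.le, inv_inv]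
    rw [heq]
    calc t⁻¹ ^ (-e) ≤ t⁻¹ ^ |e| := Real.rpow_le_rpow_of_exponent_le ht1 (neg_le_abs e)
      _ ≤ K ^ |e| := Real.rpow_le_rpow (inv_nonneg.mpr ht.le) h2 (abs_nonneg e)
      _ ≤ K ^ E := Real.rpow_le_rpow_of_exponent_le hK hE

/-- diagonal quadratic form -/
def Q {n : ℕ} (A B : Fin n → ℝ) (Z : W n) : ℝ :=
  (∑ j, A j * Z.1 j ^ 2) + ∑ j, B j * Z.2 j ^ 2

lemma Q_nonneg {n : ℕ} {A B : Fin n → ℝ} (hA : ∀ j, 0 ≤ A j) (hB : ∀ j, 0 ≤ B j) (Z : W n) :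
    0 ≤ Q A B Z :=
  add_nonneg (Finset.sum_nonneg fun j _ => mul_nonneg (hA j) (sq_nonneg _))
    (Finset.sum_nonneg fun j _ => mul_nonneg (hB j) (sq_nonneg _))

lemma exists_ne_coord {n : ℕ} {Z : W n} (hZ : Z ≠ 0) : (∃ j, Z.1 j ≠ 0) ∨ ∃ j, Z.2 j ≠ 0 := by
  by_contra h
  push_neg at h
  apply hZ
  have h1 : Z.1 = 0 := PiLp.ext h.1
  have h2 : Z.2 = 0 := PiLp.ext h.2
  exact Prod.ext h1 h2

lemma Q_pos {n : ℕ} {A B : Fin n → ℝ} (hA : ∀ j, 0 < A j) (hB : ∀ j, 0 < B j) {Z : W n}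
    (hZ : Z ≠ 0) : 0 < Q A B Z := by
  have s1 : (0:ℝ) ≤ ∑ j, A j * Z.1 j ^ 2 :=
    Finset.sum_nonneg fun j _ => mul_nonneg (hA j).le (sq_nonneg _)
  have s2 : (0:ℝ) ≤ ∑ j, B j * Z.2 j ^ 2 :=
    Finset.sum_nonneg fun j _ => mul_nonneg (hB j).le (sq_nonneg _)
  rcases exists_ne_coord hZ with ⟨j, hj⟩ | ⟨j, hj⟩
  · have : (0:ℝ) < ∑ j, A j * Z.1 j ^ 2 :=
      Finset.sum_pos' (fun i _ => mul_nonneg (hA i).le (sq_nonneg _))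
        ⟨j, Finset.mem_univ j, mul_pos (hA j) (by positivity)⟩
    rw [Q]; linarith
  · have : (0:ℝ) < ∑ j, B j * Z.2 j ^ 2 :=
      Finset.sum_pos' (fun i _ => mul_nonneg (hB i).le (sq_nonneg _))
        ⟨j, Finset.mem_univ j, mul_pos (hB j) (by positivity)⟩
    rw [Q]; linarith

end St17

namespace St17

lemma dual_diag {n : ℕ} (hn : 0 < n) {A B : Fin n → ℝ} (hA : ∀ j, 0 < A j) (hB : ∀ j, 0 < B j)
    {G : W n → ℝ} (hG : ∀ Z, G Z = Q A B Z) (Z : W n) :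
    (⨆ Y : {Y : W n // Y ≠ 0}, symp Y.1 Z ^ 2 / G Y.1) =
      Q (fun j => (B j)⁻¹) (fun j => (A j)⁻¹) Z := by
  have hne : Nonempty {Y : W n // Y ≠ 0} := by
    refine ⟨⟨(EuclideanSpace.single (⟨0, hn⟩ : Fin n) (1:ℝ), (0 : V n)), ?_⟩⟩
    intro h
    have h1 := congrArg Prod.fst h
    have h2 := congrArg (fun v : V n => v ⟨0, hn⟩) h1
    simp [EuclideanSpace.single_apply] at h2
  set S := Q (fun j => (B j)⁻¹) (fun j => (A j)⁻¹) Z with hS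
  have hSnn : 0 ≤ S :=
    Q_nonneg (fun j => inv_nonneg.mpr (hB j).le) (fun j => inv_nonneg.mpr (hA j).le) Z
  have hup : ∀ Y : {Y : W n // Y ≠ 0}, symp Y.1 Z ^ 2 / G Y.1 ≤ S := by
    rintro ⟨Y, hY⟩
    have hGY : 0 < G Y := by rw [hG]; exact Q_pos hA hB hY
    simp only
    rw [div_le_iff₀ hGY]
    set u : Fin n ⊕ Fin n → ℝ :=
      Sum.elim (fun j => Real.sqrt (B j) * Y.2 j) (fun j => Real.sqrt (A j) * Y.1 j) with hu
    set v : Fin n ⊕ Fin n → ℝ :=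
      Sum.elim (fun j => (Real.sqrt (B j))⁻¹ * Z.1 j)
        (fun j => -((Real.sqrt (A j))⁻¹ * Z.2 j)) with hv
    have hCS := Finset.sum_mul_sq_le_sq_mul_sq Finset.univ u v
    have e1 : ∑ i, u i * v i = symp Y Z := by
      have t1 : ∀ j : Fin n, u (Sum.inl j) * v (Sum.inl j) = Z.1 j * Y.2 j := by
        intro j
        simp only [hu, hv, Sum.elim_inl]
        have h := (Real.sqrt_pos.mpr (hB j)).ne'
        field_simp
      have t2 : ∀ j : Fin n, u (Sum.inr j) * v (Sum.inr j) = -(Y.1 j * Z.2 j) := by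
        intro j
        simp only [hu, hv, Sum.elim_inr]
        have h := (Real.sqrt_pos.mpr (hA j)).ne'
        field_simp
      rw [Fintype.sum_sum_type, Finset.sum_congr rfl (fun j _ => t1 j),
        Finset.sum_congr rfl (fun j _ => t2 j), symp]
      simp [sub_eq_add_neg]
    have s1 : ∑ i, u i ^ 2 = G Y := by
      have t1 : ∀ j : Fin n, u (Sum.inl j) ^ 2 = B j * Y.2 j ^ 2 := fun j => by
        simp only [hu, Sum.elim_inl, mul_pow, Real.sq_sqrt (hB j).le]
      have t2 : ∀ j : Fin n, u (Sum.inr j) ^ 2 = A j * Y.1 j ^ 2 := fun j => by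
        simp only [hu, Sum.elim_inr, mul_pow, Real.sq_sqrt (hA j).le]
      rw [Fintype.sum_sum_type, Finset.sum_congr rfl (fun j _ => t1 j),
        Finset.sum_congr rfl (fun j _ => t2 j), hG, Q, add_comm]
    have s2 : ∑ i, v i ^ 2 = S := by
      have t1 : ∀ j : Fin n, v (Sum.inl j) ^ 2 = (B j)⁻¹ * Z.1 j ^ 2 := fun j => by
        simp only [hv, Sum.elim_inl, mul_pow, inv_pow, Real.sq_sqrt (hB j).le]
      have t2 : ∀ j : Fin n, v (Sum.inr j) ^ 2 = (A j)⁻¹ * Z.2 j ^ 2 := fun j => by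
        simp only [hv, Sum.elim_inr, neg_sq, mul_pow, inv_pow, Real.sq_sqrt (hA j).le]
      rw [Fintype.sum_sum_type, Finset.sum_congr rfl (fun j _ => t1 j),
        Finset.sum_congr rfl (fun j _ => t2 j), hS, Q]
    calc symp Y Z ^ 2 = (∑ i, u i * v i) ^ 2 := by rw [e1]
      _ ≤ (∑ i, u i ^ 2) * ∑ i, v i ^ 2 := hCS
      _ = S * G Y := by rw [s1, s2]; ring
  rcases eq_or_ne Z 0 with rfl | hZ
  · have hz : ∀ Y : {Y : W n // Y ≠ 0}, symp Y.1 (0 : W n) ^ 2 / G Y.1 = 0 := by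
      rintro ⟨Y, hY⟩
      have hz0 : ∀ j, (0 : V n) j = (0:ℝ) := fun j => rfl
      simp [symp, hz0]
    have hcongr : (⨆ Y : {Y : W n // Y ≠ 0}, symp Y.1 (0 : W n) ^ 2 / G Y.1)
        = ⨆ _Y : {Y : W n // Y ≠ 0}, (0:ℝ) := by
      congr 1
      funext Y
      exact hz Y
    rw [hcongr, ciSup_const]
    have hz0 : ∀ j, (0 : V n) j = (0:ℝ) := fun j => rfl
    simp [hS, Q, hz0]
  · have hSpos : 0 < S :=
      Q_pos (fun j => inv_pos.mpr (hB j)) (fun j => inv_pos.mpr (hA j)) hZ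
    set Y0 : W n := (WithLp.toLp 2 (fun j => -((A j)⁻¹ * Z.2 j) : Fin n → ℝ),
      WithLp.toLp 2 ((fun j => (B j)⁻¹ * Z.1 j : Fin n → ℝ))) with hY0def
    have hY0 : Y0 ≠ 0 := by
      intro h
      apply hZ
      have h1 : ∀ j, Y0.1 j = 0 := fun j => congrArg (fun v : V n => v j) (congrArg Prod.fst h)
      have h2 : ∀ j, Y0.2 j = 0 := fun j => congrArg (fun v : V n => v j) (congrArg Prod.snd h)
      have hz1 : Z.1 = 0 := by
        refine PiLp.ext fun j => ?_
        have hj := h2 j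
        have hb := (hB j).ne'
        show Z.1 j = 0
        have : (B j)⁻¹ * Z.1 j = 0 := hj
        field_simp at this
        simpa using this
      have hz2 : Z.2 = 0 := by
        refine PiLp.ext fun j => ?_
        have hj := h1 j
        have ha := (hA j).ne'
        show Z.2 j = 0
        have : -((A j)⁻¹ * Z.2 j) = 0 := hj
        field_simp at this
        simpa using this
      exact Prod.ext hz1 hz2
    have hsymp : symp Y0 Z = S := by
      rw [symp, hS, Q, sub_eq_add_neg, ← Finset.sum_neg_distrib]
      congr 1
      · exact Finset.sum_congr rfl fun j _ => by
          show Z.1 j * ((B j)⁻¹ * Z.1 j) = (B j)⁻¹ * Z.1 j ^ 2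
          ring
      · exact Finset.sum_congr rfl fun j _ => by
          show -(-((A j)⁻¹ * Z.2 j) * Z.2 j) = (A j)⁻¹ * Z.2 j ^ 2
          ring
    have hGY0 : G Y0 = S := by
      have q1 : ∑ j, A j * Y0.1 j ^ 2 = ∑ j, (A j)⁻¹ * Z.2 j ^ 2 :=
        Finset.sum_congr rfl fun j _ => by
          show A j * (-((A j)⁻¹ * Z.2 j)) ^ 2 = (A j)⁻¹ * Z.2 j ^ 2
          have ha := (hA j).ne'
          field_simp
      have q2 : ∑ j, B j * Y0.2 j ^ 2 = ∑ j, (B j)⁻¹ * Z.1 j ^ 2 :=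
        Finset.sum_congr rfl fun j _ => by
          show B j * ((B j)⁻¹ * Z.1 j) ^ 2 = (B j)⁻¹ * Z.1 j ^ 2
          have hb := (hB j).ne'
          field_simp
      rw [hG, Q, hS, Q, q1, q2, add_comm]
    have hval : symp Y0 Z ^ 2 / G Y0 = S := by
      rw [hsymp, hGY0, sq, mul_div_assoc, div_self hSpos.ne', mul_one]
    have hbdd : BddAbove (Set.range fun Y : {Y : W n // Y ≠ 0} => symp Y.1 Z ^ 2 / G Y.1) :=
      ⟨S, by rintro r ⟨Y, rfl⟩; exact hup Y⟩
    refine le_antisymm (ciSup_le hup) ?_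
    rw [← hval]
    exact le_ciSup hbdd ⟨Y0, hY0⟩

end St17

namespace St17

lemma planck_diag {n : ℕ} (hn : 0 < n) {A B : Fin n → ℝ} (hA : ∀ j, 0 < A j) (hB : ∀ j, 0 < B j)
    {G Gd : W n → ℝ} (hG : ∀ Z, G Z = Q A B Z)
    (hGd : ∀ Z, Gd Z = Q (fun j => (B j)⁻¹) (fun j => (A j)⁻¹) Z) :
    (⨆ Z : {Z : W n // Z ≠ 0}, Real.sqrt (G Z.1 / Gd Z.1)) =
      ⨆ j : Fin n, Real.sqrt (A j * B j) := by
  have hfin : Nonempty (Fin n) := ⟨⟨0, hn⟩⟩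
  set f : Fin n → ℝ := fun j => Real.sqrt (A j * B j) with hf
  obtain ⟨j0, hj0⟩ := Finite.exists_max f
  have hMrange : (⨆ j, f j) = f j0 :=
    le_antisymm (ciSup_le hj0) (le_ciSup (Set.finite_range f).bddAbove j0)
  have hup : ∀ Z : {Z : W n // Z ≠ 0}, Real.sqrt (G Z.1 / Gd Z.1) ≤ f j0 := by
    rintro ⟨Z, hZ⟩
    have hGdpos : 0 < Gd Z := by
      rw [hGd]
      exact Q_pos (fun j => inv_pos.mpr (hB j)) (fun j => inv_pos.mpr (hA j)) hZ
    have hkey : G Z ≤ f j0 ^ 2 * Gd Z := by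
      rw [hG, hGd, Q, Q, mul_add, Finset.mul_sum, Finset.mul_sum]
      have hab : ∀ j, A j * B j ≤ f j0 ^ 2 := by
        intro j
        have h1 := hj0 j
        have h2 : f j ^ 2 = A j * B j := Real.sq_sqrt (mul_pos (hA j) (hB j)).le
        nlinarith [Real.sqrt_nonneg (A j * B j), Real.sqrt_nonneg (A j0 * B j0)]
      refine add_le_add (Finset.sum_le_sum fun j _ => ?_) (Finset.sum_le_sum fun j _ => ?_)
      · have h2 : A j ≤ f j0 ^ 2 * (B j)⁻¹ := by
          rw [← div_eq_mul_inv, le_div_iff₀ (hB j)]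
          exact hab j
        calc A j * Z.1 j ^ 2 ≤ (f j0 ^ 2 * (B j)⁻¹) * Z.1 j ^ 2 :=
              mul_le_mul_of_nonneg_right h2 (sq_nonneg _)
          _ = f j0 ^ 2 * ((B j)⁻¹ * Z.1 j ^ 2) := by ring
      · have h2 : B j ≤ f j0 ^ 2 * (A j)⁻¹ := by
          rw [← div_eq_mul_inv, le_div_iff₀ (hA j)]
          nlinarith [hab j]
        calc B j * Z.2 j ^ 2 ≤ (f j0 ^ 2 * (A j)⁻¹) * Z.2 j ^ 2 :=
              mul_le_mul_of_nonneg_right h2 (sq_nonneg _)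
          _ = f j0 ^ 2 * ((A j)⁻¹ * Z.2 j ^ 2) := by ring
    calc Real.sqrt (G Z / Gd Z) ≤ Real.sqrt (f j0 ^ 2) :=
          Real.sqrt_le_sqrt ((div_le_iff₀ hGdpos).mpr hkey)
      _ = f j0 := Real.sqrt_sq (Real.sqrt_nonneg _)
  have hne : Nonempty {Z : W n // Z ≠ 0} := by
    refine ⟨⟨(EuclideanSpace.single (⟨0, hn⟩ : Fin n) (1:ℝ), (0 : V n)), ?_⟩⟩
    intro h
    have h1 := congrArg Prod.fst h
    have h2 := congrArg (fun v : V n => v ⟨0, hn⟩) h1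
    simp [EuclideanSpace.single_apply] at h2
  set Z0 : W n := (EuclideanSpace.single j0 (1:ℝ), (0 : V n)) with hZ0def
  have hZ0 : Z0 ≠ 0 := by
    intro h
    have h1 := congrArg Prod.fst h
    have h2 := congrArg (fun v : V n => v j0) h1
    simp [hZ0def, EuclideanSpace.single_apply] at h2
  have hz0 : ∀ j, (0 : V n) j = (0:ℝ) := fun j => rfl
  have hGZ0 : G Z0 = A j0 := by
    rw [hG, Q]
    simp [hZ0def, EuclideanSpace.single_apply, hz0, apply_ite (fun t : ℝ => t ^ 2), mul_ite,
      Finset.sum_ite_eq']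
  have hGdZ0 : Gd Z0 = (B j0)⁻¹ := by
    rw [hGd, Q]
    simp [hZ0def, EuclideanSpace.single_apply, hz0, apply_ite (fun t : ℝ => t ^ 2), mul_ite,
      Finset.sum_ite_eq']
  have hval : Real.sqrt (G Z0 / Gd Z0) = f j0 := by
    rw [hGZ0, hGdZ0, div_inv_eq_mul]
  have hbdd : BddAbove (Set.range fun Z : {Z : W n // Z ≠ 0} => Real.sqrt (G Z.1 / Gd Z.1)) :=
    ⟨f j0, by rintro r ⟨Z, rfl⟩; exact hup Z⟩
  refine le_antisymm ((ciSup_le hup).trans_eq hMrange.symm) ?_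
  rw [hMrange, ← hval]
  exact le_ciSup hbdd ⟨Z0, hZ0⟩

end St17

namespace St17

lemma norm_sq_eq {n : ℕ} (z : V n) : ‖z‖ ^ 2 = ∑ j, z j ^ 2 := by
  rw [EuclideanSpace.norm_eq,
    Real.sq_sqrt (Finset.sum_nonneg fun j _ => sq_nonneg _)]
  simp [sq_abs]

lemma norm_le_of_coords {n : ℕ} {z : V n} {t : ℝ} (h : ∀ j, z j ^ 2 ≤ t) :
    ‖z‖ ≤ Real.sqrt (n * t) := by
  rw [show ‖z‖ = Real.sqrt (‖z‖ ^ 2) from (Real.sqrt_sq (norm_nonneg z)).symm]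
  apply Real.sqrt_le_sqrt
  rw [norm_sq_eq]
  calc ∑ j, z j ^ 2 ≤ ∑ _j : Fin n, t := Finset.sum_le_sum fun j _ => h j
    _ = n * t := by simp [Finset.sum_const, nsmul_eq_mul]

lemma sqrt_le_one_add {w : ℝ} (hw : 0 ≤ w) : Real.sqrt w ≤ 1 + w := by
  nlinarith [Real.sq_sqrt hw, Real.sqrt_nonneg w, sq_nonneg (Real.sqrt w - 1)]

lemma bracket_pow_compare {n : ℕ} {x ξ x' ξ' : V n} {K e f E : ℝ} (hK : 1 ≤ K)
    (h1 : jap x ≤ K * jap x') (h2 : jap x' ≤ K * jap x)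
    (h3 : jap ξ ≤ K * jap ξ') (h4 : jap ξ' ≤ K * jap ξ)
    (hef : |e| + |f| ≤ E) :
    jap x ^ e * jap ξ ^ f ≤ K ^ E * (jap x' ^ e * jap ξ' ^ f) := by
  have hx' := jap_pos x'
  have hξ' := jap_pos ξ'
  have hKpos : (0:ℝ) < K := lt_of_lt_of_le one_pos hK
  set t := jap x / jap x' with htdef
  set s := jap ξ / jap ξ' with hsdef
  have ht : 0 < t := div_pos (jap_pos x) hx'
  have hs : 0 < s := div_pos (jap_pos ξ) hξ'
  have htK : t ≤ K := (div_le_iff₀ hx').mpr h1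
  have htinv : t⁻¹ ≤ K := by
    rw [htdef, inv_div]
    exact (div_le_iff₀ (jap_pos x)).mpr h2
  have hsK : s ≤ K := (div_le_iff₀ hξ').mpr h3
  have hsinv : s⁻¹ ≤ K := by
    rw [hsdef, inv_div]
    exact (div_le_iff₀ (jap_pos ξ)).mpr h4
  have he : t ^ e ≤ K ^ |e| := rpow_comp_le ht hK htK htinv le_rfl
  have hfb : s ^ f ≤ K ^ |f| := rpow_comp_le hs hK hsK hsinv le_rfl
  have hxe : jap x ^ e = t ^ e * jap x' ^ e := by
    rw [← Real.mul_rpow ht.le hx'.le, htdef, div_mul_cancel₀ _ hx'.ne']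
  have hξf : jap ξ ^ f = s ^ f * jap ξ' ^ f := by
    rw [← Real.mul_rpow hs.le hξ'.le, hsdef, div_mul_cancel₀ _ hξ'.ne']
  have hts : t ^ e * s ^ f ≤ K ^ E := by
    calc t ^ e * s ^ f ≤ K ^ |e| * K ^ |f| :=
          mul_le_mul he hfb (Real.rpow_nonneg hs.le f) (Real.rpow_nonneg hKpos.le _)
      _ = K ^ (|e| + |f|) := (Real.rpow_add hKpos _ _).symm
      _ ≤ K ^ E := Real.rpow_le_rpow_of_exponent_le hK hef
  calc jap x ^ e * jap ξ ^ f = (t ^ e * s ^ f) * (jap x' ^ e * jap ξ' ^ f) := by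
        rw [hxe, hξf]; ring
    _ ≤ K ^ E * (jap x' ^ e * jap ξ' ^ f) :=
        mul_le_mul_of_nonneg_right hts
          (mul_nonneg (Real.rpow_nonneg hx'.le e) (Real.rpow_nonneg hξ'.le f))

/-- exponent bound constant -/
def Ec {n : ℕ} (ρ δ : Fin n ⊕ Fin n → ℝ) : ℝ := (∑ i, 2 * |ρ i|) + ∑ i, 2 * |δ i|

lemma Ec_nonneg {n : ℕ} (ρ δ : Fin n ⊕ Fin n → ℝ) : 0 ≤ Ec ρ δ :=
  add_nonneg (Finset.sum_nonneg fun i _ => by positivity)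
    (Finset.sum_nonneg fun i _ => by positivity)

lemma Ec_bound {n : ℕ} (ρ δ : Fin n ⊕ Fin n → ℝ) (i i' : Fin n ⊕ Fin n) :
    2 * |ρ i| + 2 * |δ i'| ≤ Ec ρ δ :=
  add_le_add
    (Finset.single_le_sum (f := fun k => 2 * |ρ k|) (fun k _ => by positivity)
      (Finset.mem_univ i))
    (Finset.single_le_sum (f := fun k => 2 * |δ k|) (fun k _ => by positivity)
      (Finset.mem_univ i'))

lemma ratio_bound {a b v d q : ℝ} (ha : 1 ≤ a) (hv : 0 ≤ v) (hd0 : 0 ≤ d) (hd1 : d < 1)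
    (hq : q = 1 / (1 - d)) (hb1 : 0 < b) (h : b ≤ a + v * b ^ d) :
    b ≤ (2 + (2 * v) ^ q) * a := by
  have h2vnn : (0:ℝ) ≤ 2 * v := by linarith
  have hqpos : 0 < q := by rw [hq]; exact one_div_pos.mpr (by linarith)
  have hpow_nn : 0 ≤ (2 * v) ^ q := Real.rpow_nonneg h2vnn q
  rcases le_or_gt b (2 * a) with hcase | hcase
  · nlinarith
  · have hbdpos : 0 < b ^ d := Real.rpow_pos_of_pos hb1 d
    have hbd : b ≤ 2 * v * b ^ d := by linarith
    have hb1d : b ^ (1 - d) ≤ 2 * v := by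
      rw [show (1:ℝ) - d = 1 + -d by ring, Real.rpow_add hb1, Real.rpow_one,
        Real.rpow_neg hb1.le, ← div_eq_mul_inv, div_le_iff₀ hbdpos]
      exact hbd
    have hbq : b ≤ (2 * v) ^ q := by
      have h1 : (b ^ (1 - d)) ^ q ≤ (2 * v) ^ q :=
        Real.rpow_le_rpow (Real.rpow_nonneg hb1.le _) hb1d hqpos.le
      rw [← Real.rpow_mul hb1.le] at h1
      have heq : (1 - d) * q = 1 := by
        rw [hq, mul_one_div, div_self (show (1:ℝ) - d ≠ 0 by linarith)]
      rw [heq, Real.rpow_one] at h1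
      exact h1
    nlinarith

end St17


namespace St17

lemma sqrt_rpow_even {t : ℝ} (ht : 0 ≤ t) (e : ℝ) :
    Real.sqrt (t ^ (2 * e)) = t ^ e := by
  rw [show 2 * e = e * 2 by ring, Real.rpow_mul ht, Real.rpow_two,
    Real.sqrt_sq (Real.rpow_nonneg ht e)]

lemma Q_le_first {n : ℕ} {A B : Fin n → ℝ} (hA : ∀ j, 0 ≤ A j) (hB : ∀ j, 0 ≤ B j)
    (Z : W n) (j : Fin n) : A j * Z.1 j ^ 2 ≤ Q A B Z := by
  have h1 : A j * Z.1 j ^ 2 ≤ ∑ k, A k * Z.1 k ^ 2 :=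
    Finset.single_le_sum (f := fun k => A k * Z.1 k ^ 2)
      (fun k _ => mul_nonneg (hA k) (sq_nonneg _)) (Finset.mem_univ j)
  have h2 : (0:ℝ) ≤ ∑ k, B k * Z.2 k ^ 2 :=
    Finset.sum_nonneg fun k _ => mul_nonneg (hB k) (sq_nonneg _)
  simp only [Q]
  linarith

lemma Q_le_second {n : ℕ} {A B : Fin n → ℝ} (hA : ∀ j, 0 ≤ A j) (hB : ∀ j, 0 ≤ B j)
    (Z : W n) (j : Fin n) : B j * Z.2 j ^ 2 ≤ Q A B Z := by
  have h1 : B j * Z.2 j ^ 2 ≤ ∑ k, B k * Z.2 k ^ 2 :=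
    Finset.single_le_sum (f := fun k => B k * Z.2 k ^ 2)
      (fun k _ => mul_nonneg (hB k) (sq_nonneg _)) (Finset.mem_univ j)
  have h2 : (0:ℝ) ≤ ∑ k, A k * Z.1 k ^ 2 :=
    Finset.sum_nonneg fun k _ => mul_nonneg (hA k) (sq_nonneg _)
  simp only [Q]
  linarith

/-- coefficient of the metric -/
def coA {n : ℕ} (ρ δ : Fin n ⊕ Fin n → ℝ) (x ξ : V n) (j : Fin n) : ℝ :=
  jap x ^ (-2 * ρ (Sum.inr j)) * jap ξ ^ (2 * δ (Sum.inl j))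

def coB {n : ℕ} (ρ δ : Fin n ⊕ Fin n → ℝ) (x ξ : V n) (j : Fin n) : ℝ :=
  jap x ^ (2 * δ (Sum.inr j)) * jap ξ ^ (-2 * ρ (Sum.inl j))

end St17

open St17


set_option maxHeartbeats 2000000 in
/-- Lemma `rhodeltafeasible`: properties of the metric
`g_{(x,ξ)}(y,η) = Σ ⟨x⟩^{-2ρ_{n+j}} ⟨ξ⟩^{2δ_j} y_j² + Σ ⟨x⟩^{2δ_{n+j}} ⟨ξ⟩^{-2ρ_j} η_j²`
and weight `m(x,ξ) = ⟨x⟩^s ⟨ξ⟩^r`.  (The index `inl j` is `j ∈ {1,…,n}` and `inr j`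
is `n+j`.) -/
theorem statement17 (n : ℕ) (hn : 0 < n) (r s : ℝ) (ρ δ : Fin n ⊕ Fin n → ℝ)
    (g : RMetric n)
    (hgval : ∀ x ξ y η : V n, g.val (x, ξ) (y, η) =
      (∑ j, jap x ^ (-2 * ρ (Sum.inr j)) * jap ξ ^ (2 * δ (Sum.inl j)) * y j ^ 2) +
        ∑ j, jap x ^ (2 * δ (Sum.inr j)) * jap ξ ^ (-2 * ρ (Sum.inl j)) * η j ^ 2)
    (m : W n → ℝ) (hmval : ∀ x ξ : V n, m (x, ξ) = jap x ^ s * jap ξ ^ r) :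
    IsSplitted g ∧
    (∀ x ξ y η : V n, dualM g (x, ξ) (y, η) =
      (∑ j, jap x ^ (-2 * δ (Sum.inr j)) * jap ξ ^ (2 * ρ (Sum.inl j)) * y j ^ 2) +
        ∑ j, jap x ^ (2 * ρ (Sum.inr j)) * jap ξ ^ (-2 * δ (Sum.inl j)) * η j ^ 2) ∧
    (∀ x ξ : V n, planck g (x, ξ) =
      ⨆ j : Fin n, jap x ^ (δ (Sum.inr j) - ρ (Sum.inr j)) *
        jap ξ ^ (δ (Sum.inl j) - ρ (Sum.inl j))) ∧
    ((∀ i, ρ i ≤ 1) → (∀ i, 0 ≤ δ i) → IsSlowlyVarying g ∧ IsGCont g m) ∧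
    ((∀ i, 0 ≤ δ i) → (∀ i, δ i ≤ ρ i) → (∀ i, ρ i ≤ 1) → IsFeasible g) ∧
    ((∀ i, 0 ≤ δ i) → (∀ i, δ i ≤ ρ i) → (∀ i, ρ i ≤ 1) → (∀ i, δ i < 1) →
      IsStronglyFeasible g) := by
  have hnn : Nonempty (Fin n) := ⟨⟨0, hn⟩⟩
  have hn1 : (1:ℝ) ≤ (n:ℝ) := by exact_mod_cast hn
  have hAp : ∀ (x ξ : V n) (j : Fin n), 0 < coA ρ δ x ξ j := fun x ξ j =>
    mul_pos (Real.rpow_pos_of_pos (jap_pos x) _) (Real.rpow_pos_of_pos (jap_pos ξ) _)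
  have hBp : ∀ (x ξ : V n) (j : Fin n), 0 < coB ρ δ x ξ j := fun x ξ j =>
    mul_pos (Real.rpow_pos_of_pos (jap_pos x) _) (Real.rpow_pos_of_pos (jap_pos ξ) _)
  have hQg : ∀ (x ξ : V n) (Z : W n), g.val (x, ξ) Z = Q (coA ρ δ x ξ) (coB ρ δ x ξ) Z := by
    intro x ξ Z
    simp only [Q, coA, coB]
    exact hgval x ξ Z.1 Z.2
  have hdual : ∀ (x ξ : V n) (Z : W n), dualM g (x, ξ) Z =
      Q (fun j => (coB ρ δ x ξ j)⁻¹) (fun j => (coA ρ δ x ξ j)⁻¹) Z := by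
    intro x ξ Z
    simp only [dualM, dualFn]
    exact dual_diag hn (hAp x ξ) (hBp x ξ) (hQg x ξ) Z
  have hgnn : ∀ (x ξ : V n) (Z : W n), 0 ≤ g.val (x, ξ) Z := fun x ξ Z => by
    rw [hQg]
    exact Q_nonneg (fun j => (hAp x ξ j).le) (fun j => (hBp x ξ j).le) Z
  -- Part 1 : splitted
  have psplit : IsSplitted g := by
    intro X z ζ
    obtain ⟨x, ξ⟩ := X
    rw [hgval, hgval]
    congr 1
    refine Finset.sum_congr rfl fun j _ => ?_
    rw [show (-ζ) j = -(ζ j) from rfl, neg_sq]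
  -- Part 2 : dual metric
  have part2 : ∀ x ξ y η : V n, dualM g (x, ξ) (y, η) =
      (∑ j, jap x ^ (-2 * δ (Sum.inr j)) * jap ξ ^ (2 * ρ (Sum.inl j)) * y j ^ 2) +
        ∑ j, jap x ^ (2 * ρ (Sum.inr j)) * jap ξ ^ (-2 * δ (Sum.inl j)) * η j ^ 2 := by
    intro x ξ y η
    rw [hdual x ξ (y, η)]
    simp only [Q, coA, coB]
    congr 1
    · refine Finset.sum_congr rfl fun j _ => ?_
      rw [mul_inv, ← Real.rpow_neg (jap_nonneg x), ← Real.rpow_neg (jap_nonneg ξ),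
        show -(2 * δ (Sum.inr j)) = -2 * δ (Sum.inr j) by ring,
        show -(-2 * ρ (Sum.inl j)) = 2 * ρ (Sum.inl j) by ring]
    · refine Finset.sum_congr rfl fun j _ => ?_
      rw [mul_inv, ← Real.rpow_neg (jap_nonneg x), ← Real.rpow_neg (jap_nonneg ξ),
        show -(-2 * ρ (Sum.inr j)) = 2 * ρ (Sum.inr j) by ring,
        show -(2 * δ (Sum.inl j)) = -2 * δ (Sum.inl j) by ring]
  -- Part 3 : Planck function
  have part3 : ∀ x ξ : V n, planck g (x, ξ) =
      ⨆ j : Fin n, jap x ^ (δ (Sum.inr j) - ρ (Sum.inr j)) *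
        jap ξ ^ (δ (Sum.inl j) - ρ (Sum.inl j)) := by
    intro x ξ
    have h := planck_diag hn (hAp x ξ) (hBp x ξ) (hQg x ξ) (hdual x ξ)
    simp only [planck]
    rw [h]
    congr 1
    funext j
    have hm : coA ρ δ x ξ j * coB ρ δ x ξ j =
        jap x ^ (2 * (δ (Sum.inr j) - ρ (Sum.inr j))) *
          jap ξ ^ (2 * (δ (Sum.inl j) - ρ (Sum.inl j))) := by
      simp only [coA, coB]
      rw [mul_mul_mul_comm, ← Real.rpow_add (jap_pos x), ← Real.rpow_add (jap_pos ξ)]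
      rw [show -2 * ρ (Sum.inr j) + 2 * δ (Sum.inr j)
            = 2 * (δ (Sum.inr j) - ρ (Sum.inr j)) by ring,
        show 2 * δ (Sum.inl j) + -2 * ρ (Sum.inl j)
            = 2 * (δ (Sum.inl j) - ρ (Sum.inl j)) by ring]
    rw [hm, Real.sqrt_mul (Real.rpow_nonneg (jap_nonneg x) _),
      sqrt_rpow_even (jap_nonneg x), sqrt_rpow_even (jap_nonneg ξ)]
  -- metric comparison under bracket comparison
  have hcomp : ∀ (x ξ x' ξ' : V n) (K : ℝ), 1 ≤ K → jap x ≤ K * jap x' →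
      jap x' ≤ K * jap x → jap ξ ≤ K * jap ξ' → jap ξ' ≤ K * jap ξ → ∀ Z : W n,
      g.val (x, ξ) Z ≤ K ^ Ec ρ δ * g.val (x', ξ') Z := by
    intro x ξ x' ξ' K hK h1 h2 h3 h4 Z
    rw [hQg x ξ Z, hQg x' ξ' Z]
    simp only [Q, coA, coB]
    rw [mul_add, Finset.mul_sum, Finset.mul_sum]
    refine add_le_add (Finset.sum_le_sum fun j _ => ?_) (Finset.sum_le_sum fun j _ => ?_)
    · have hE : |(-2 : ℝ) * ρ (Sum.inr j)| + |(2:ℝ) * δ (Sum.inl j)| ≤ Ec ρ δ := by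
        rw [abs_mul, abs_mul, show |(-2:ℝ)| = 2 by norm_num, show |(2:ℝ)| = 2 by norm_num]
        exact Ec_bound ρ δ _ _
      have hcmp := bracket_pow_compare (e := -2 * ρ (Sum.inr j)) (f := 2 * δ (Sum.inl j))
        hK h1 h2 h3 h4 hE
      calc jap x ^ (-2 * ρ (Sum.inr j)) * jap ξ ^ (2 * δ (Sum.inl j)) * Z.1 j ^ 2
          ≤ (K ^ Ec ρ δ * (jap x' ^ (-2 * ρ (Sum.inr j)) * jap ξ' ^ (2 * δ (Sum.inl j))))
            * Z.1 j ^ 2 := mul_le_mul_of_nonneg_right hcmp (sq_nonneg _)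
        _ = K ^ Ec ρ δ * (jap x' ^ (-2 * ρ (Sum.inr j)) * jap ξ' ^ (2 * δ (Sum.inl j))
            * Z.1 j ^ 2) := by ring
    · have hE : |(2:ℝ) * δ (Sum.inr j)| + |(-2:ℝ) * ρ (Sum.inl j)| ≤ Ec ρ δ := by
        rw [abs_mul, abs_mul, show |(-2:ℝ)| = 2 by norm_num, show |(2:ℝ)| = 2 by norm_num]
        linarith [Ec_bound ρ δ (Sum.inl j) (Sum.inr j)]
      have hcmp := bracket_pow_compare (e := 2 * δ (Sum.inr j)) (f := -2 * ρ (Sum.inl j))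
        hK h1 h2 h3 h4 hE
      calc jap x ^ (2 * δ (Sum.inr j)) * jap ξ ^ (-2 * ρ (Sum.inl j)) * Z.2 j ^ 2
          ≤ (K ^ Ec ρ δ * (jap x' ^ (2 * δ (Sum.inr j)) * jap ξ' ^ (-2 * ρ (Sum.inl j))))
            * Z.2 j ^ 2 := mul_le_mul_of_nonneg_right hcmp (sq_nonneg _)
        _ = K ^ Ec ρ δ * (jap x' ^ (2 * δ (Sum.inr j)) * jap ξ' ^ (-2 * ρ (Sum.inl j))
            * Z.2 j ^ 2) := by ring
  -- bracket bounds from smallness of g X (Y - X)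
  have hbrk : (∀ i, ρ i ≤ 1) → (∀ i, 0 ≤ δ i) → ∀ x1 x2 y1 y2 : V n,
      g.val (x1, x2) ((y1, y2) - (x1, x2)) ≤ (4 * (n:ℝ))⁻¹ →
      jap y1 ≤ 2 * jap x1 ∧ jap x1 ≤ 2 * jap y1 ∧
        jap y2 ≤ 2 * jap x2 ∧ jap x2 ≤ 2 * jap y2 := by
    intro hρ1 hδ0 x1 x2 y1 y2 h
    rw [hQg] at h
    have main : ∀ (a b : V n) (C : Fin n → ℝ),
        (∀ j, (jap a ^ (2:ℝ))⁻¹ ≤ C j) → (∀ j, C j * (b j - a j) ^ 2 ≤ (4*(n:ℝ))⁻¹) →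
        jap b ≤ 2 * jap a ∧ jap a ≤ 2 * jap b := by
      intro a b C hClb hCj
      have hp : (0:ℝ) < jap a ^ (2:ℝ) := Real.rpow_pos_of_pos (jap_pos a) _
      have hcoord : ∀ j, (b j - a j) ^ 2 ≤ (4*(n:ℝ))⁻¹ * jap a ^ (2:ℝ) := by
        intro j
        have h3 : (jap a ^ (2:ℝ))⁻¹ * (b j - a j) ^ 2 ≤ (4*(n:ℝ))⁻¹ :=
          le_trans (mul_le_mul_of_nonneg_right (hClb j) (sq_nonneg _)) (hCj j)
        calc (b j - a j) ^ 2
            = (jap a ^ (2:ℝ)) * ((jap a ^ (2:ℝ))⁻¹ * (b j - a j) ^ 2) := by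
              rw [← mul_assoc, mul_inv_cancel₀ hp.ne', one_mul]
          _ ≤ (jap a ^ (2:ℝ)) * (4*(n:ℝ))⁻¹ := mul_le_mul_of_nonneg_left h3 hp.le
          _ = (4*(n:ℝ))⁻¹ * jap a ^ (2:ℝ) := by ring
      have hnormc : ‖b - a‖ ≤ Real.sqrt ((n:ℝ) * ((4*(n:ℝ))⁻¹ * jap a ^ (2:ℝ))) :=
        norm_le_of_coords (fun j => by
          rw [show (b - a) j = b j - a j from rfl]
          exact hcoord j)
      have hred : (n:ℝ) * ((4*(n:ℝ))⁻¹ * jap a ^ (2:ℝ)) = (jap a / 2) ^ 2 := by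
        rw [Real.rpow_two]
        have hne : (n:ℝ) ≠ 0 := by positivity
        field_simp
        ring
      have hnorm : ‖b - a‖ ≤ jap a / 2 := by
        rw [hred, Real.sqrt_sq (div_nonneg (jap_nonneg a) (by norm_num))] at hnormc
        exact hnormc
      constructor
      · have := jap_le_add b a
        linarith [jap_nonneg a]
      · have h5 := jap_le_add a b
        have hrev : ‖a - b‖ = ‖b - a‖ := norm_sub_rev a b
        rw [hrev] at h5
        linarith
    have hlbA : ∀ j, (jap x1 ^ (2:ℝ))⁻¹ ≤ coA ρ δ x1 x2 j := by
      intro j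
      have h1 : jap x1 ^ (-(2:ℝ)) ≤ jap x1 ^ (-2 * ρ (Sum.inr j)) :=
        Real.rpow_le_rpow_of_exponent_le (one_le_jap x1) (by nlinarith [hρ1 (Sum.inr j)])
      have h2 : (1:ℝ) ≤ jap x2 ^ (2 * δ (Sum.inl j)) :=
        Real.one_le_rpow (one_le_jap x2) (by linarith [hδ0 (Sum.inl j)])
      calc (jap x1 ^ (2:ℝ))⁻¹ = jap x1 ^ (-(2:ℝ)) := (Real.rpow_neg (jap_nonneg x1) 2).symm
        _ ≤ jap x1 ^ (-2 * ρ (Sum.inr j)) := h1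
        _ ≤ jap x1 ^ (-2 * ρ (Sum.inr j)) * jap x2 ^ (2 * δ (Sum.inl j)) :=
            le_mul_of_one_le_right (Real.rpow_nonneg (jap_nonneg x1) _) h2
    have hlbB : ∀ j, (jap x2 ^ (2:ℝ))⁻¹ ≤ coB ρ δ x1 x2 j := by
      intro j
      have h1 : jap x2 ^ (-(2:ℝ)) ≤ jap x2 ^ (-2 * ρ (Sum.inl j)) :=
        Real.rpow_le_rpow_of_exponent_le (one_le_jap x2) (by nlinarith [hρ1 (Sum.inl j)])
      have h2 : (1:ℝ) ≤ jap x1 ^ (2 * δ (Sum.inr j)) :=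
        Real.one_le_rpow (one_le_jap x1) (by linarith [hδ0 (Sum.inr j)])
      calc (jap x2 ^ (2:ℝ))⁻¹ = jap x2 ^ (-(2:ℝ)) := (Real.rpow_neg (jap_nonneg x2) 2).symm
        _ ≤ jap x2 ^ (-2 * ρ (Sum.inl j)) := h1
        _ ≤ jap x1 ^ (2 * δ (Sum.inr j)) * jap x2 ^ (-2 * ρ (Sum.inl j)) :=
            le_mul_of_one_le_left (Real.rpow_nonneg (jap_nonneg x2) _) h2
    have hCj1 : ∀ j, coA ρ δ x1 x2 j * (y1 j - x1 j) ^ 2 ≤ (4*(n:ℝ))⁻¹ := by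
      intro j
      exact le_trans
        (Q_le_first (fun k => (hAp x1 x2 k).le) (fun k => (hBp x1 x2 k).le)
          ((y1, y2) - (x1, x2)) j) h
    have hCj2 : ∀ j, coB ρ δ x1 x2 j * (y2 j - x2 j) ^ 2 ≤ (4*(n:ℝ))⁻¹ := by
      intro j
      exact le_trans
        (Q_le_second (fun k => (hAp x1 x2 k).le) (fun k => (hBp x1 x2 k).le)
          ((y1, y2) - (x1, x2)) j) h
    obtain ⟨ha1, ha2⟩ := main x1 y1 (coA ρ δ x1 x2) hlbA hCj1
    obtain ⟨hb1, hb2⟩ := main x2 y2 (coB ρ δ x1 x2) hlbB hCj2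
    exact ⟨ha1, ha2, hb1, hb2⟩
  have hcinv : (0:ℝ) < (4 * (n:ℝ))⁻¹ := by positivity
  -- Part 4a : slowly varying
  have hsv : (∀ i, ρ i ≤ 1) → (∀ i, 0 ≤ δ i) → IsSlowlyVarying g := by
    intro hρ1 hδ0
    refine ⟨(4*(n:ℝ))⁻¹, hcinv, (2:ℝ) ^ Ec ρ δ, Real.rpow_pos_of_pos two_pos _, ?_⟩
    intro X Y hXY Z
    obtain ⟨x1, x2⟩ := X
    obtain ⟨y1, y2⟩ := Y
    obtain ⟨b1, b2, b3, b4⟩ := hbrk hρ1 hδ0 x1 x2 y1 y2 hXY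
    constructor
    · rw [inv_mul_le_iff₀ (Real.rpow_pos_of_pos two_pos _)]
      exact hcomp y1 y2 x1 x2 2 one_le_two b1 b2 b3 b4 Z
    · exact hcomp x1 x2 y1 y2 2 one_le_two b2 b1 b4 b3 Z
  -- Part 4b : m is g-continuous
  have hgc : (∀ i, ρ i ≤ 1) → (∀ i, 0 ≤ δ i) → IsGCont g m := by
    intro hρ1 hδ0
    refine ⟨(4*(n:ℝ))⁻¹, hcinv, (2:ℝ) ^ (|s| + |r|), Real.rpow_pos_of_pos two_pos _, ?_⟩
    intro X Y hXY
    obtain ⟨x1, x2⟩ := X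
    obtain ⟨y1, y2⟩ := Y
    obtain ⟨b1, b2, b3, b4⟩ := hbrk hρ1 hδ0 x1 x2 y1 y2 hXY
    rw [hmval, hmval]
    constructor
    · rw [inv_mul_le_iff₀ (Real.rpow_pos_of_pos two_pos _)]
      exact bracket_pow_compare one_le_two b1 b2 b3 b4 le_rfl
    · exact bracket_pow_compare one_le_two b2 b1 b4 b3 le_rfl
  -- Planck ≤ 1
  have hpl : (∀ i, 0 ≤ δ i) → (∀ i, δ i ≤ ρ i) → ∀ X : W n, planck g X ≤ 1 := by
    intro hδ0 hδρ X
    obtain ⟨x1, x2⟩ := X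
    rw [part3 x1 x2]
    refine ciSup_le fun j => ?_
    have h1 : jap x1 ^ (δ (Sum.inr j) - ρ (Sum.inr j)) ≤ 1 :=
      Real.rpow_le_one_of_one_le_of_nonpos (one_le_jap x1) (by linarith [hδρ (Sum.inr j)])
    have h2 : jap x2 ^ (δ (Sum.inl j) - ρ (Sum.inl j)) ≤ 1 :=
      Real.rpow_le_one_of_one_le_of_nonpos (one_le_jap x2) (by linarith [hδρ (Sum.inl j)])
    have h3 := Real.rpow_nonneg (jap_nonneg x1) (δ (Sum.inr j) - ρ (Sum.inr j))
    have h4 := Real.rpow_nonneg (jap_nonneg x2) (δ (Sum.inl j) - ρ (Sum.inl j))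
    nlinarith
  -- σ-temperate
  have htemp : (∀ i, 0 ≤ δ i) → (∀ i, δ i ≤ ρ i) → (∀ i, ρ i ≤ 1) → (∀ i, δ i < 1) →
      IsSigmaTemperate g := by
    intro hδ0 hδρ hρ1 hδ1
    have hρ0 : ∀ i, 0 ≤ ρ i := fun i => le_trans (hδ0 i) (hδρ i)
    have hsne : Nonempty (Fin n ⊕ Fin n) := ⟨Sum.inl ⟨0, hn⟩⟩
    obtain ⟨i0, hi0⟩ := Finite.exists_max δ
    set d : ℝ := δ i0 with hd
    have hd0 : 0 ≤ d := hδ0 i0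
    have hd1 : d < 1 := hδ1 i0
    set q : ℝ := 1 / (1 - d) with hqdef
    have hq0 : 0 < q := one_div_pos.mpr (by linarith)
    set N : ℕ := ⌈q⌉₊ + 1 with hN
    have hqN : q ≤ (N:ℝ) := by
      have h := Nat.le_ceil q
      have : ((N:ℕ):ℝ) = (⌈q⌉₊ : ℝ) + 1 := by rw [hN]; push_cast; ring
      rw [this]
      linarith
    have h1N : (1:ℝ) ≤ (N:ℝ) := by
      have : 1 ≤ N := by omega
      exact_mod_cast this
    set C₀ : ℝ := (2 + (2 * ((n:ℝ) + 1)) ^ q) + (1 + (n:ℝ)) with hC₀def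
    have hpq : (0:ℝ) ≤ (2 * ((n:ℝ) + 1)) ^ q := Real.rpow_nonneg (by positivity) q
    have hC₀1 : 1 ≤ C₀ := by rw [hC₀def]; nlinarith
    have hC₀0 : 0 < C₀ := by linarith
    set E : ℝ := Ec ρ δ with hE
    refine ⟨C₀ ^ E, Real.rpow_pos_of_pos hC₀0 E, ⌈(N:ℝ) * E⌉₊, ?_⟩
    intro X Y Z
    obtain ⟨x1, x2⟩ := X
    obtain ⟨y1, y2⟩ := Y
    set u : ℝ := dualM g (y1, y2) ((x1, x2) - (y1, y2)) with hudef
    have huQ : u = Q (fun j => (coB ρ δ y1 y2 j)⁻¹) (fun j => (coA ρ δ y1 y2 j)⁻¹)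
        ((x1, x2) - (y1, y2)) := hdual y1 y2 _
    have hu0 : 0 ≤ u := by
      rw [huQ]
      exact Q_nonneg (fun j => inv_nonneg.mpr (hBp y1 y2 j).le)
        (fun j => inv_nonneg.mpr (hAp y1 y2 j).le) _
    set v : ℝ := Real.sqrt ((n:ℝ) * u) with hv
    have hv0 : 0 ≤ v := Real.sqrt_nonneg _
    have hu1 : (0:ℝ) < 1 + u := by linarith
    have hNpow1 : (1:ℝ) ≤ (1 + u) ^ ((N:ℕ):ℝ) :=
      Real.one_le_rpow (by linarith) (by positivity)
    have hpow_mono : (1 + u) ≤ (1 + u) ^ ((N:ℕ):ℝ) := by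
      calc (1 + u) = (1 + u) ^ (1:ℝ) := (Real.rpow_one _).symm
        _ ≤ (1 + u) ^ ((N:ℕ):ℝ) := Real.rpow_le_rpow_of_exponent_le (by linarith) h1N
    -- coordinate estimates from the dual metric
    have hcoordx : ∀ j, (x1 j - y1 j) ^ 2 ≤ u * jap y1 ^ (2 * d) := by
      intro j
      have hterm : (coB ρ δ y1 y2 j)⁻¹ * (x1 j - y1 j) ^ 2 ≤ u := by
        rw [huQ]
        exact Q_le_first (fun k => inv_nonneg.mpr (hBp y1 y2 k).le)
          (fun k => inv_nonneg.mpr (hAp y1 y2 k).le) ((x1, x2) - (y1, y2)) j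
      have hBub : coB ρ δ y1 y2 j ≤ jap y1 ^ (2 * d) := by
        have h1 : jap y1 ^ (2 * δ (Sum.inr j)) ≤ jap y1 ^ (2 * d) :=
          Real.rpow_le_rpow_of_exponent_le (one_le_jap y1) (by nlinarith [hi0 (Sum.inr j)])
        have h2 : jap y2 ^ (-2 * ρ (Sum.inl j)) ≤ 1 :=
          Real.rpow_le_one_of_one_le_of_nonpos (one_le_jap y2) (by nlinarith [hρ0 (Sum.inl j)])
        calc coB ρ δ y1 y2 j
            ≤ jap y1 ^ (2 * δ (Sum.inr j)) * 1 :=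
              mul_le_mul_of_nonneg_left h2 (Real.rpow_nonneg (jap_nonneg y1) _)
          _ = jap y1 ^ (2 * δ (Sum.inr j)) := mul_one _
          _ ≤ jap y1 ^ (2 * d) := h1
      have hBpos := hBp y1 y2 j
      have hppos : (0:ℝ) < jap y1 ^ (2*d) := Real.rpow_pos_of_pos (jap_pos y1) _
      calc (x1 j - y1 j) ^ 2
          = coB ρ δ y1 y2 j * ((coB ρ δ y1 y2 j)⁻¹ * (x1 j - y1 j) ^ 2) := by
            rw [← mul_assoc, mul_inv_cancel₀ hBpos.ne', one_mul]
        _ ≤ jap y1 ^ (2*d) * u :=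
            mul_le_mul hBub hterm (mul_nonneg (inv_nonneg.mpr hBpos.le) (sq_nonneg _)) hppos.le
        _ = u * jap y1 ^ (2*d) := mul_comm _ _
    have hcoordξ : ∀ j, (x2 j - y2 j) ^ 2 ≤ u * jap y2 ^ (2 * d) := by
      intro j
      have hterm : (coA ρ δ y1 y2 j)⁻¹ * (x2 j - y2 j) ^ 2 ≤ u := by
        rw [huQ]
        exact Q_le_second (fun k => inv_nonneg.mpr (hBp y1 y2 k).le)
          (fun k => inv_nonneg.mpr (hAp y1 y2 k).le) ((x1, x2) - (y1, y2)) j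
      have hAub : coA ρ δ y1 y2 j ≤ jap y2 ^ (2 * d) := by
        have h1 : jap y2 ^ (2 * δ (Sum.inl j)) ≤ jap y2 ^ (2 * d) :=
          Real.rpow_le_rpow_of_exponent_le (one_le_jap y2) (by nlinarith [hi0 (Sum.inl j)])
        have h2 : jap y1 ^ (-2 * ρ (Sum.inr j)) ≤ 1 :=
          Real.rpow_le_one_of_one_le_of_nonpos (one_le_jap y1) (by nlinarith [hρ0 (Sum.inr j)])
        calc coA ρ δ y1 y2 j
            ≤ 1 * jap y2 ^ (2 * δ (Sum.inl j)) :=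
              mul_le_mul_of_nonneg_right h2 (Real.rpow_nonneg (jap_nonneg y2) _)
          _ = jap y2 ^ (2 * δ (Sum.inl j)) := one_mul _
          _ ≤ jap y2 ^ (2 * d) := h1
      have hApos := hAp y1 y2 j
      have hppos : (0:ℝ) < jap y2 ^ (2*d) := Real.rpow_pos_of_pos (jap_pos y2) _
      calc (x2 j - y2 j) ^ 2
          = coA ρ δ y1 y2 j * ((coA ρ δ y1 y2 j)⁻¹ * (x2 j - y2 j) ^ 2) := by
            rw [← mul_assoc, mul_inv_cancel₀ hApos.ne', one_mul]
        _ ≤ jap y2 ^ (2*d) * u :=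
            mul_le_mul hAub hterm (mul_nonneg (inv_nonneg.mpr hApos.le) (sq_nonneg _)) hppos.le
        _ = u * jap y2 ^ (2*d) := mul_comm _ _
    have hnormx : ‖x1 - y1‖ ≤ v * jap y1 ^ d := by
      have h := norm_le_of_coords (z := x1 - y1) (t := u * jap y1 ^ (2*d)) (fun j => by
        rw [show (x1 - y1) j = x1 j - y1 j from rfl]
        exact hcoordx j)
      calc ‖x1 - y1‖ ≤ Real.sqrt ((n:ℝ) * (u * jap y1 ^ (2*d))) := h
        _ = Real.sqrt ((n:ℝ) * u) * Real.sqrt (jap y1 ^ (2*d)) := by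
            rw [← mul_assoc, Real.sqrt_mul (by positivity)]
        _ = v * jap y1 ^ d := by rw [sqrt_rpow_even (jap_nonneg y1)]
    have hnormξ : ‖x2 - y2‖ ≤ v * jap y2 ^ d := by
      have h := norm_le_of_coords (z := x2 - y2) (t := u * jap y2 ^ (2*d)) (fun j => by
        rw [show (x2 - y2) j = x2 j - y2 j from rfl]
        exact hcoordξ j)
      calc ‖x2 - y2‖ ≤ Real.sqrt ((n:ℝ) * (u * jap y2 ^ (2*d))) := h
        _ = Real.sqrt ((n:ℝ) * u) * Real.sqrt (jap y2 ^ (2*d)) := by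
            rw [← mul_assoc, Real.sqrt_mul (by positivity)]
        _ = v * jap y2 ^ d := by rw [sqrt_rpow_even (jap_nonneg y2)]
    have hpair : ∀ a b : V n, ‖a - b‖ ≤ v * jap b ^ d →
        jap a ≤ C₀ * (1 + u) ^ ((N:ℕ):ℝ) * jap b ∧
          jap b ≤ C₀ * (1 + u) ^ ((N:ℕ):ℝ) * jap a := by
      intro a b hab
      have hja := one_le_jap a
      have hjb := one_le_jap b
      have hbd_le : jap b ^ d ≤ jap b := by
        calc jap b ^ d ≤ jap b ^ (1:ℝ) :=
              Real.rpow_le_rpow_of_exponent_le hjb (by linarith)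
          _ = jap b := Real.rpow_one _
      have h1 : jap a ≤ jap b + v * jap b ^ d := le_trans (jap_le_add a b) (by linarith)
      have hvu : v ≤ 1 + (n:ℝ) * u := sqrt_le_one_add (by positivity)
      have h1nu : 1 + (n:ℝ)*u ≤ ((n:ℝ)+1)*(1+u) := by nlinarith
      constructor
      · have hv_japb : v * jap b ^ d ≤ v * jap b := mul_le_mul_of_nonneg_left hbd_le hv0
        have key : 1 + v ≤ C₀ * (1+u) ^ ((N:ℕ):ℝ) := by
          have hv2 : 1 + v ≤ (2 + (n:ℝ)) * (1 + u) := by nlinarith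
          have hc2 : (2 + (n:ℝ)) ≤ C₀ := by rw [hC₀def]; nlinarith
          have h3 : (2 + (n:ℝ)) * (1+u) ≤ C₀ * (1+u) :=
            mul_le_mul_of_nonneg_right hc2 (by linarith)
          have h4 : C₀ * (1+u) ≤ C₀ * (1+u) ^ ((N:ℕ):ℝ) :=
            mul_le_mul_of_nonneg_left hpow_mono hC₀0.le
          linarith
        calc jap a ≤ jap b + v * jap b := by linarith
          _ = (1 + v) * jap b := by ring
          _ ≤ (C₀ * (1+u) ^ ((N:ℕ):ℝ)) * jap b :=
              mul_le_mul_of_nonneg_right key (jap_nonneg b)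
      · have h2 : jap b ≤ jap a + v * jap b ^ d := by
          have h6 := jap_le_add b a
          rw [norm_sub_rev b a] at h6
          linarith
        have h3 := ratio_bound hja hv0 hd0 hd1 hqdef (jap_pos b) h2
        have h4 : 2 + (2*v)^q ≤ C₀ * (1+u) ^ ((N:ℕ):ℝ) := by
          have hq2 : (2*v)^q ≤ (2*((n:ℝ)+1))^q * (1+u) ^ ((N:ℕ):ℝ) := by
            calc (2*v)^q ≤ (2*(((n:ℝ)+1)*(1+u)))^q :=
                  Real.rpow_le_rpow (by linarith) (by nlinarith) hq0.le
              _ = (2*((n:ℝ)+1))^q * (1+u)^q := by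
                  rw [show 2*(((n:ℝ)+1)*(1+u)) = (2*((n:ℝ)+1))*(1+u) by ring,
                    Real.mul_rpow (by positivity) (by linarith)]
              _ ≤ (2*((n:ℝ)+1))^q * (1+u) ^ ((N:ℕ):ℝ) :=
                  mul_le_mul_of_nonneg_left
                    (Real.rpow_le_rpow_of_exponent_le (by linarith) hqN) hpq
          have h2le : (2:ℝ) ≤ 2 * (1+u) ^ ((N:ℕ):ℝ) := by nlinarith [hNpow1]
          have hrest : (0:ℝ) ≤ (1 + (n:ℝ)) * (1+u) ^ ((N:ℕ):ℝ) := by positivity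
          have hexp : C₀ * (1+u) ^ ((N:ℕ):ℝ)
              = 2 * (1+u) ^ ((N:ℕ):ℝ) + (2*((n:ℝ)+1))^q * (1+u) ^ ((N:ℕ):ℝ)
                + (1 + (n:ℝ)) * (1+u) ^ ((N:ℕ):ℝ) := by
            rw [hC₀def]; ring
          rw [hexp]
          linarith
        calc jap b ≤ (2 + (2*v)^q) * jap a := h3
          _ ≤ (C₀ * (1+u) ^ ((N:ℕ):ℝ)) * jap a :=
              mul_le_mul_of_nonneg_right h4 (jap_nonneg a)
    obtain ⟨px1, px2⟩ := hpair x1 y1 hnormx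
    obtain ⟨pξ1, pξ2⟩ := hpair x2 y2 hnormξ
    have hK1 : 1 ≤ C₀ * (1 + u) ^ ((N:ℕ):ℝ) := by nlinarith [hNpow1]
    have hmain := hcomp y1 y2 x1 x2 (C₀ * (1 + u) ^ ((N:ℕ):ℝ)) hK1 px2 px1 pξ2 pξ1 Z
    have hgXnn : 0 ≤ g.val (x1, x2) Z := hgnn x1 x2 Z
    have hKE : (C₀ * (1 + u) ^ ((N:ℕ):ℝ)) ^ E = C₀ ^ E * (1+u) ^ (((N:ℕ):ℝ) * E) := by
      rw [Real.mul_rpow hC₀0.le (Real.rpow_nonneg (by linarith) _),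
        ← Real.rpow_mul (by linarith : (0:ℝ) ≤ 1 + u)]
    have hfin : (1+u) ^ (((N:ℕ):ℝ) * E) ≤ (1+u) ^ (⌈(N:ℝ)*E⌉₊ : ℕ) := by
      rw [← Real.rpow_natCast (1+u) ⌈(N:ℝ)*E⌉₊]
      exact Real.rpow_le_rpow_of_exponent_le (by linarith) (Nat.le_ceil _)
    have hC₀E : (0:ℝ) ≤ C₀ ^ E := Real.rpow_nonneg hC₀0.le E
    calc g.val (y1, y2) Z ≤ (C₀ * (1 + u) ^ ((N:ℕ):ℝ)) ^ E * g.val (x1, x2) Z := hmain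
      _ = C₀ ^ E * (1+u) ^ (((N:ℕ):ℝ) * E) * g.val (x1,x2) Z := by rw [hKE]
      _ ≤ C₀ ^ E * (1+u) ^ (⌈(N:ℝ)*E⌉₊ : ℕ) * g.val (x1,x2) Z :=
          mul_le_mul_of_nonneg_right (mul_le_mul_of_nonneg_left hfin hC₀E) hgXnn
      _ = C₀ ^ E * g.val (x1,x2) Z * (1 + u) ^ (⌈(N:ℝ)*E⌉₊ : ℕ) := by ring
  exact ⟨psplit, part2, part3, fun h1 h2 => ⟨hsv h1 h2, hgc h1 h2⟩,
    fun h1 h2 h3 => ⟨hsv h3 h1, hpl h1 h2⟩,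
    fun h1 h2 h3 h4 => ⟨⟨hsv h3 h1, hpl h1 h2⟩, htemp h1 h2 h3 h4⟩⟩


end
end
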